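/- arXiv:2502.03095 — 2 statements merged into one kernel-verified Lean document; each statement's English description precedes it below -/
import Mathlib

section
/- Consider the Reward-Difference-Approximation loss of the softmax-parametrized policy, L(θ) = Σ_{x∈X} 𝒟(x) · Σ_{y₁,y₂∈Y} π_θ(y₁|x)·π_θ(y₂|x) · ((1/τ)·log(π_θ(y₁|x)/π_θ(y₂|x)) − (r(x,y₁) − r(x,y₂)))². Let ε₂ ≥ 0 and suppose θ satisfies |(1/τ)·log(π_θ(y₁|x)/π_θ(y₂|x)) − (r(x,y₁) − r(x,y₂))| ≤ ε₂ for all x ∈ X and y₁, y₂ ∈ Y. Then the second derivative of L at θ satisfies |D²L(θ)(z,z)| ≤ (20·ε₂² + 32·ε₂/τ + 8/τ²)·Σ_{x,y} z(x,y)² for every direction z : X × Y → ℝ. -/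
set_option maxHeartbeats 1000000

open Real Finset

namespace RDA18

variable {Y : Type*} [Fintype Y]

noncomputable def S (u v : Y → ℝ) (t : ℝ) : ℝ := ∑ y, exp (u y + t * v y)
noncomputable def S1 (u v : Y → ℝ) (t : ℝ) : ℝ := ∑ y, v y * exp (u y + t * v y)
noncomputable def S2 (u v : Y → ℝ) (t : ℝ) : ℝ := ∑ y, v y ^ 2 * exp (u y + t * v y)

noncomputable def N (u v : Y → ℝ) (a : Y → Y → ℝ) (c t : ℝ) : ℝ :=
  ∑ y₁, ∑ y₂, exp (u y₁ + u y₂ + t * (v y₁ + v y₂)) *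
    (a y₁ y₂ + c * t * (v y₁ - v y₂)) ^ 2

noncomputable def N1 (u v : Y → ℝ) (a : Y → Y → ℝ) (c t : ℝ) : ℝ :=
  ∑ y₁, ∑ y₂, exp (u y₁ + u y₂ + t * (v y₁ + v y₂)) *
    ((v y₁ + v y₂) * (a y₁ y₂ + c * t * (v y₁ - v y₂)) ^ 2 +
      2 * c * (v y₁ - v y₂) * (a y₁ y₂ + c * t * (v y₁ - v y₂)))

noncomputable def N2 (u v : Y → ℝ) (a : Y → Y → ℝ) (c t : ℝ) : ℝ :=
  ∑ y₁, ∑ y₂, exp (u y₁ + u y₂ + t * (v y₁ + v y₂)) *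
    ((v y₁ + v y₂) ^ 2 * (a y₁ y₂ + c * t * (v y₁ - v y₂)) ^ 2 +
      4 * c * (v y₁ - v y₂) * (v y₁ + v y₂) * (a y₁ y₂ + c * t * (v y₁ - v y₂)) +
      2 * c ^ 2 * (v y₁ - v y₂) ^ 2)

noncomputable def G1 (u v : Y → ℝ) (a : Y → Y → ℝ) (c t : ℝ) : ℝ :=
  N1 u v a c t / S u v t ^ 2 - 2 * N u v a c t * S1 u v t / S u v t ^ 3

noncomputable def G2 (u v : Y → ℝ) (a : Y → Y → ℝ) (c t : ℝ) : ℝ :=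
  N2 u v a c t / S u v t ^ 2 - 4 * N1 u v a c t * S1 u v t / S u v t ^ 3
    - 2 * N u v a c t * S2 u v t / S u v t ^ 3
    + 6 * N u v a c t * S1 u v t ^ 2 / S u v t ^ 4

section hasDeriv

variable (u v : Y → ℝ) (a : Y → Y → ℝ) (c t : ℝ)

lemma hasDerivAt_aff (p q : ℝ) : HasDerivAt (fun s : ℝ => p + s * q) q t := by
  simpa using ((hasDerivAt_id t).mul_const q).const_add p

lemma hasDerivAt_expterm (p q : ℝ) :
    HasDerivAt (fun s : ℝ => exp (p + s * q)) (q * exp (p + t * q)) t := by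
  simpa [mul_comm] using (hasDerivAt_aff t p q).exp

lemma hasDerivAt_S : HasDerivAt (S u v) (S1 u v t) t :=
  HasDerivAt.fun_sum fun y _ => hasDerivAt_expterm t (u y) (v y)

lemma hasDerivAt_S1 : HasDerivAt (S1 u v) (S2 u v t) t := by
  refine HasDerivAt.fun_sum fun y _ => ?_
  simpa [pow_two, mul_assoc] using (hasDerivAt_expterm t (u y) (v y)).const_mul (v y)

lemma hasDerivAt_N : HasDerivAt (N u v a c) (N1 u v a c t) t := by
  refine HasDerivAt.fun_sum fun y₁ _ => HasDerivAt.fun_sum fun y₂ _ => ?_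
  have he := hasDerivAt_expterm t (u y₁ + u y₂) (v y₁ + v y₂)
  have ha : HasDerivAt (fun s : ℝ => (a y₁ y₂ + c * s * (v y₁ - v y₂)) ^ 2)
      (2 * (a y₁ y₂ + c * t * (v y₁ - v y₂)) * (c * (v y₁ - v y₂))) t := by
    have h0 : ∀ s : ℝ, a y₁ y₂ + c * s * (v y₁ - v y₂) =
        a y₁ y₂ + s * (c * (v y₁ - v y₂)) := fun s => by ring
    simp only [h0]
    have := (hasDerivAt_aff t (a y₁ y₂) (c * (v y₁ - v y₂))).pow 2
    refine this.congr_deriv ?_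
    push_cast; ring
  have := he.mul ha
  refine this.congr_deriv ?_
  ring

lemma hasDerivAt_N1 : HasDerivAt (N1 u v a c) (N2 u v a c t) t := by
  refine HasDerivAt.fun_sum fun y₁ _ => HasDerivAt.fun_sum fun y₂ _ => ?_
  have he := hasDerivAt_expterm t (u y₁ + u y₂) (v y₁ + v y₂)
  have hA : HasDerivAt (fun s : ℝ => a y₁ y₂ + c * s * (v y₁ - v y₂))
      (c * (v y₁ - v y₂)) t := by
    have h0 : ∀ s : ℝ, a y₁ y₂ + c * s * (v y₁ - v y₂) =
        a y₁ y₂ + s * (c * (v y₁ - v y₂)) := fun s => by ring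
    simp only [h0]; exact hasDerivAt_aff t _ _
  have hpoly : HasDerivAt (fun s : ℝ =>
      (v y₁ + v y₂) * (a y₁ y₂ + c * s * (v y₁ - v y₂)) ^ 2 +
        2 * c * (v y₁ - v y₂) * (a y₁ y₂ + c * s * (v y₁ - v y₂)))
      ((v y₁ + v y₂) * (2 * (a y₁ y₂ + c * t * (v y₁ - v y₂)) * (c * (v y₁ - v y₂))) +
        2 * c * (v y₁ - v y₂) * (c * (v y₁ - v y₂))) t :=
    ((hA.pow 2).const_mul _).add (hA.const_mul _) |>.congr_deriv (by push_cast; ring)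
  have := he.mul hpoly
  refine this.congr_deriv ?_
  ring

lemma S_pos [Nonempty Y] : 0 < S u v t :=
  Finset.sum_pos (fun y _ => exp_pos _) univ_nonempty

lemma hasDerivAt_G [Nonempty Y] :
    HasDerivAt (fun s => N u v a c s / S u v s ^ 2) (G1 u v a c t) t := by
  have hs := (S_pos u v t).ne'
  have hq := (hasDerivAt_N u v a c t).fun_div ((hasDerivAt_S u v t).fun_pow 2)
    (pow_ne_zero 2 hs)
  refine hq.congr_deriv ?_
  unfold G1
  field_simp
  ring

lemma hasDerivAt_G1 [Nonempty Y] :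
    HasDerivAt (G1 u v a c) (G2 u v a c t) t := by
  have hs := (S_pos u v t).ne'
  have hA := (hasDerivAt_N1 u v a c t).fun_div ((hasDerivAt_S u v t).fun_pow 2)
    (pow_ne_zero 2 hs)
  have hB := (((hasDerivAt_N u v a c t).const_mul 2).fun_mul (hasDerivAt_S1 u v t)).fun_div
    ((hasDerivAt_S u v t).fun_pow 3) (pow_ne_zero 3 hs)
  have := hA.fun_sub hB
  have heq : (fun s => N1 u v a c s / S u v s ^ 2 -
      2 * N u v a c s * S1 u v s / S u v s ^ 3) = G1 u v a c := by
    funext s; rfl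
  rw [heq] at this
  refine this.congr_deriv ?_
  unfold G2
  field_simp
  ring

end hasDeriv

section bound

variable [Nonempty Y] (u v : Y → ℝ) (a : Y → Y → ℝ) (c ε : ℝ)

lemma key_double (E : Y → ℝ) (hE : ∀ y, 0 ≤ E y) (f M : Y → Y → ℝ)
    (h : ∀ y₁ y₂, |f y₁ y₂| ≤ M y₁ y₂) :
    |∑ y₁, ∑ y₂, E y₁ * E y₂ * f y₁ y₂| ≤ ∑ y₁, ∑ y₂, E y₁ * E y₂ * M y₁ y₂ := by
  calc |∑ y₁, ∑ y₂, E y₁ * E y₂ * f y₁ y₂|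
      ≤ ∑ y₁, |∑ y₂, E y₁ * E y₂ * f y₁ y₂| := Finset.abs_sum_le_sum_abs _ _
    _ ≤ ∑ y₁, ∑ y₂, |E y₁ * E y₂ * f y₁ y₂| :=
        Finset.sum_le_sum fun y₁ _ => Finset.abs_sum_le_sum_abs _ _
    _ ≤ ∑ y₁, ∑ y₂, E y₁ * E y₂ * M y₁ y₂ := by
        refine Finset.sum_le_sum fun y₁ _ => Finset.sum_le_sum fun y₂ _ => ?_
        rw [abs_mul, abs_mul, abs_of_nonneg (hE y₁), abs_of_nonneg (hE y₂)]
        have := h y₁ y₂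
        have h0 : 0 ≤ E y₁ * E y₂ := mul_nonneg (hE y₁) (hE y₂)
        nlinarith [abs_nonneg (f y₁ y₂)]

lemma prod_double (E f g : Y → ℝ) :
    ∑ y₁, ∑ y₂, E y₁ * E y₂ * (f y₁ * g y₂) =
      (∑ y, E y * f y) * (∑ y, E y * g y) := by
  rw [Finset.sum_mul_sum]
  exact Finset.sum_congr rfl fun y₁ _ => Finset.sum_congr rfl fun y₂ _ => by ring

lemma double_eval (E h : Y → ℝ) (K : ℝ) :
    ∑ y₁, ∑ y₂, E y₁ * E y₂ * ((h y₁ + h y₂) * K) =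
      2 * K * ((∑ y, E y * h y) * (∑ y, E y)) := by
  have hsplit : ∀ y₁ y₂ : Y, E y₁ * E y₂ * ((h y₁ + h y₂) * K) =
      E y₁ * E y₂ * (h y₁ * K * 1) + E y₁ * E y₂ * (1 * (h y₂ * K)) :=
    fun _ _ => by ring
  simp only [hsplit, Finset.sum_add_distrib]
  rw [prod_double E (fun y => h y * K) (fun _ => 1),
    prod_double E (fun _ => 1) (fun y => h y * K)]
  have e1 : ∑ y, E y * (h y * K) = K * ∑ y, E y * h y := by
    rw [Finset.mul_sum]; exact Finset.sum_congr rfl fun y _ => by ring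
  have e2 : ∑ y, E y * (1:ℝ) = ∑ y, E y := by simp
  rw [e1, e2]; ring

lemma G2_bound (hc : 0 ≤ c) (hε : 0 ≤ ε) (ha : ∀ y₁ y₂, |a y₁ y₂| ≤ ε) :
    |G2 u v a c 0| ≤ (20 * ε ^ 2 + 32 * c * ε + 8 * c ^ 2) * ∑ y, v y ^ 2 := by
  classical
  set E : Y → ℝ := fun y => exp (u y) with hE_def
  have hE : ∀ y, 0 ≤ E y := fun y => (exp_pos _).le
  set s := ∑ y, E y with hs_def
  set T := ∑ y, E y * |v y| with hT_def
  set Q := ∑ y, E y * v y ^ 2 with hQ_def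
  set V := ∑ y, v y ^ 2 with hV_def
  have hs : 0 < s := Finset.sum_pos (fun y _ => exp_pos _) univ_nonempty
  have hT0 : 0 ≤ T := Finset.sum_nonneg fun y _ => mul_nonneg (hE y) (abs_nonneg _)
  have hQ0 : 0 ≤ Q := Finset.sum_nonneg fun y _ => mul_nonneg (hE y) (sq_nonneg _)
  have hV0 : 0 ≤ V := Finset.sum_nonneg fun y _ => sq_nonneg _
  -- values at 0
  have hS0 : S u v 0 = s := by simp [S, hs_def, hE_def]
  have hS10 : S1 u v 0 = ∑ y, v y * E y := by simp [S1, hE_def]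
  have hS20 : S2 u v 0 = Q := by
    simp only [S2, hQ_def, hE_def, zero_mul, add_zero]
    exact Finset.sum_congr rfl fun y _ => by ring
  have hN0 : N u v a c 0 = ∑ y₁, ∑ y₂, E y₁ * E y₂ * (a y₁ y₂ ^ 2) := by
    simp [N, exp_add, hE_def]
  have hN10 : N1 u v a c 0 = ∑ y₁, ∑ y₂, E y₁ * E y₂ *
      ((v y₁ + v y₂) * a y₁ y₂ ^ 2 + 2 * c * (v y₁ - v y₂) * a y₁ y₂) := by
    simp [N1, exp_add, hE_def]
  have hN20 : N2 u v a c 0 = ∑ y₁, ∑ y₂, E y₁ * E y₂ *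
      ((v y₁ + v y₂) ^ 2 * a y₁ y₂ ^ 2 +
        4 * c * (v y₁ - v y₂) * (v y₁ + v y₂) * a y₁ y₂ +
        2 * c ^ 2 * (v y₁ - v y₂) ^ 2) := by
    simp [N2, exp_add, hE_def]
  -- Cauchy-Schwarz : T^2 ≤ s * Q
  have hCS : T ^ 2 ≤ s * Q := by
    have := Finset.sum_mul_sq_le_sq_mul_sq Finset.univ
      (fun y => Real.sqrt (E y)) (fun y => Real.sqrt (E y) * |v y|)
    have h1 : ∀ y, Real.sqrt (E y) * (Real.sqrt (E y) * |v y|) = E y * |v y| :=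
      fun y => by rw [← mul_assoc, Real.mul_self_sqrt (hE y)]
    have h2 : ∀ y, Real.sqrt (E y) ^ 2 = E y := fun y => Real.sq_sqrt (hE y)
    have h3 : ∀ y, (Real.sqrt (E y) * |v y|) ^ 2 = E y * v y ^ 2 := fun y => by
      rw [mul_pow, Real.sq_sqrt (hE y), sq_abs]
    simp only [h1, h2, h3] at this
    simpa [hT_def, hs_def, hQ_def] using this
  -- |S1 0| ≤ T
  have hS1b : |S1 u v 0| ≤ T := by
    rw [hS10]
    calc |∑ y, v y * E y| ≤ ∑ y, |v y * E y| := Finset.abs_sum_le_sum_abs _ _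
      _ = T := Finset.sum_congr rfl fun y _ => by
          rw [abs_mul, abs_of_nonneg (hE y)]; ring
  -- pointwise square bound
  have ha2 : ∀ y₁ y₂, a y₁ y₂ ^ 2 ≤ ε ^ 2 := fun y₁ y₂ => by
    rw [← sq_abs]; exact pow_le_pow_left₀ (abs_nonneg _) (ha _ _) 2
  -- |N 0| ≤ ε^2 * s^2
  have hNb : |N u v a c 0| ≤ ε ^ 2 * s ^ 2 := by
    rw [hN0]
    calc |∑ y₁, ∑ y₂, E y₁ * E y₂ * a y₁ y₂ ^ 2|
        ≤ ∑ y₁, ∑ y₂, E y₁ * E y₂ * (1 * ε ^ 2) := by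
          refine key_double E hE _ _ fun y₁ y₂ => ?_
          rw [abs_of_nonneg (sq_nonneg _), one_mul]
          exact ha2 y₁ y₂
      _ = ε ^ 2 * s ^ 2 := by
          rw [prod_double E (fun _ => 1) (fun _ => ε ^ 2)]
          simp only [mul_one]
          rw [show ∑ y, E y * ε ^ 2 = (∑ y, E y) * ε ^ 2 from (Finset.sum_mul _ _ _).symm]
          rw [← hs_def]; ring
  -- |N1 0| ≤ 2 * (ε^2 + 2cε) * (T * s)
  have hN1b : |N1 u v a c 0| ≤ 2 * (ε ^ 2 + 2 * c * ε) * (T * s) := by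
    rw [hN10]
    calc |∑ y₁, ∑ y₂, E y₁ * E y₂ *
          ((v y₁ + v y₂) * a y₁ y₂ ^ 2 + 2 * c * (v y₁ - v y₂) * a y₁ y₂)|
        ≤ ∑ y₁, ∑ y₂, E y₁ * E y₂ *
            ((|v y₁| + |v y₂|) * (ε ^ 2 + 2 * c * ε)) := by
          refine key_double E hE _ _ fun y₁ y₂ => ?_
          have hb1 : |(v y₁ + v y₂) * a y₁ y₂ ^ 2| ≤ (|v y₁| + |v y₂|) * ε ^ 2 := by
            rw [abs_mul, abs_pow]
            have : |a y₁ y₂| ^ 2 ≤ ε ^ 2 := pow_le_pow_left₀ (abs_nonneg _) (ha _ _) 2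
            exact mul_le_mul (abs_add_le _ _) this (by positivity) (by positivity)
          have hb2 : |2 * c * (v y₁ - v y₂) * a y₁ y₂| ≤
              2 * c * ((|v y₁| + |v y₂|) * ε) := by
            rw [abs_mul, abs_mul, abs_of_nonneg (show (0:ℝ) ≤ 2 * c by linarith)]
            rw [mul_assoc]
            refine mul_le_mul_of_nonneg_left ?_ (by linarith)
            exact mul_le_mul (abs_sub _ _) (ha _ _) (abs_nonneg _) (by positivity)
          calc |(v y₁ + v y₂) * a y₁ y₂ ^ 2 + 2 * c * (v y₁ - v y₂) * a y₁ y₂|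
              ≤ |(v y₁ + v y₂) * a y₁ y₂ ^ 2| + |2 * c * (v y₁ - v y₂) * a y₁ y₂| :=
                abs_add_le _ _
            _ ≤ (|v y₁| + |v y₂|) * ε ^ 2 + 2 * c * ((|v y₁| + |v y₂|) * ε) := by
                linarith
            _ = (|v y₁| + |v y₂|) * (ε ^ 2 + 2 * c * ε) := by ring
      _ = 2 * (ε ^ 2 + 2 * c * ε) * (T * s) := by
          rw [double_eval E (fun y => |v y|) (ε ^ 2 + 2 * c * ε)]
  -- |N2 0| ≤ 2 * (2ε^2 + 4cε + 4c^2) * (Q * s)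
  have hN2b : |N2 u v a c 0| ≤ 2 * (2 * ε ^ 2 + 4 * c * ε + 4 * c ^ 2) * (Q * s) := by
    rw [hN20]
    calc |∑ y₁, ∑ y₂, E y₁ * E y₂ *
          ((v y₁ + v y₂) ^ 2 * a y₁ y₂ ^ 2 +
            4 * c * (v y₁ - v y₂) * (v y₁ + v y₂) * a y₁ y₂ +
            2 * c ^ 2 * (v y₁ - v y₂) ^ 2)|
        ≤ ∑ y₁, ∑ y₂, E y₁ * E y₂ *
            ((v y₁ ^ 2 + v y₂ ^ 2) * (2 * ε ^ 2 + 4 * c * ε + 4 * c ^ 2)) := by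
          refine key_double E hE _ _ fun y₁ y₂ => ?_
          have hb1 : |(v y₁ + v y₂) ^ 2 * a y₁ y₂ ^ 2| ≤
              2 * (v y₁ ^ 2 + v y₂ ^ 2) * ε ^ 2 := by
            rw [abs_of_nonneg (by positivity)]
            exact mul_le_mul (by nlinarith [sq_nonneg (v y₁ - v y₂)]) (ha2 y₁ y₂)
              (sq_nonneg _) (by positivity)
          have hb2 : |4 * c * (v y₁ - v y₂) * (v y₁ + v y₂) * a y₁ y₂| ≤
              4 * c * ((v y₁ ^ 2 + v y₂ ^ 2) * ε) := by
            have h4 : (4:ℝ) * c * (v y₁ - v y₂) * (v y₁ + v y₂) * a y₁ y₂ =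
                4 * c * (((v y₁ - v y₂) * (v y₁ + v y₂)) * a y₁ y₂) := by ring
            rw [h4, abs_mul, abs_of_nonneg (show (0:ℝ) ≤ 4 * c by linarith)]
            refine mul_le_mul_of_nonneg_left ?_ (by linarith)
            rw [abs_mul]
            refine mul_le_mul ?_ (ha _ _) (abs_nonneg _) (by positivity)
            have : (v y₁ - v y₂) * (v y₁ + v y₂) = v y₁ ^ 2 - v y₂ ^ 2 := by ring
            rw [this]
            calc |v y₁ ^ 2 - v y₂ ^ 2| ≤ |v y₁ ^ 2| + |v y₂ ^ 2| := abs_sub _ _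
              _ = v y₁ ^ 2 + v y₂ ^ 2 := by
                  rw [abs_of_nonneg (sq_nonneg _), abs_of_nonneg (sq_nonneg _)]
          have hb3 : |2 * c ^ 2 * (v y₁ - v y₂) ^ 2| ≤
              2 * c ^ 2 * (2 * (v y₁ ^ 2 + v y₂ ^ 2)) := by
            rw [abs_of_nonneg (by positivity)]
            refine mul_le_mul_of_nonneg_left ?_ (by positivity)
            nlinarith [sq_nonneg (v y₁ + v y₂)]
          calc |(v y₁ + v y₂) ^ 2 * a y₁ y₂ ^ 2 +
                4 * c * (v y₁ - v y₂) * (v y₁ + v y₂) * a y₁ y₂ +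
                2 * c ^ 2 * (v y₁ - v y₂) ^ 2|
              ≤ |(v y₁ + v y₂) ^ 2 * a y₁ y₂ ^ 2 +
                  4 * c * (v y₁ - v y₂) * (v y₁ + v y₂) * a y₁ y₂| +
                |2 * c ^ 2 * (v y₁ - v y₂) ^ 2| := abs_add_le _ _
            _ ≤ |(v y₁ + v y₂) ^ 2 * a y₁ y₂ ^ 2| +
                |4 * c * (v y₁ - v y₂) * (v y₁ + v y₂) * a y₁ y₂| +
                |2 * c ^ 2 * (v y₁ - v y₂) ^ 2| := by
                  linarith [abs_add_le ((v y₁ + v y₂) ^ 2 * a y₁ y₂ ^ 2)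
                    (4 * c * (v y₁ - v y₂) * (v y₁ + v y₂) * a y₁ y₂)]
            _ ≤ (v y₁ ^ 2 + v y₂ ^ 2) * (2 * ε ^ 2 + 4 * c * ε + 4 * c ^ 2) := by
                  nlinarith [hb1, hb2, hb3]
      _ = 2 * (2 * ε ^ 2 + 4 * c * ε + 4 * c ^ 2) * (Q * s) := by
          rw [double_eval E (fun y => v y ^ 2) (2 * ε ^ 2 + 4 * c * ε + 4 * c ^ 2)]
  -- assemble
  clear_value E s T Q V
  have hs4 : (0:ℝ) < s ^ 4 := by positivity
  have hK0 : (0:ℝ) ≤ 20 * ε ^ 2 + 24 * c * ε + 8 * c ^ 2 := by positivity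
  have hG2eq : G2 u v a c 0 =
      (N2 u v a c 0 * s ^ 2 - 4 * N1 u v a c 0 * S1 u v 0 * s
        - 2 * N u v a c 0 * Q * s + 6 * N u v a c 0 * S1 u v 0 ^ 2) / s ^ 4 := by
    unfold G2
    rw [hS0, hS20]
    field_simp
  have hQV : Q ≤ s * V := by
    rw [hQ_def, hV_def, hs_def, Finset.mul_sum]
    refine Finset.sum_le_sum fun y _ => ?_
    exact mul_le_mul_of_nonneg_right
      (Finset.single_le_sum (fun y _ => hE y) (Finset.mem_univ y)) (sq_nonneg _)
  have hS1sq : S1 u v 0 ^ 2 ≤ s * Q := by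
    have h1 : S1 u v 0 ^ 2 ≤ T ^ 2 := by
      rw [← sq_abs]
      exact pow_le_pow_left₀ (abs_nonneg _) hS1b 2
    linarith
  have htri : ∀ x1 x2 x3 x4 : ℝ, |x1 - x2 - x3 + x4| ≤ |x1| + |x2| + |x3| + |x4| := by
    intro x1 x2 x3 x4
    have h1 : |x1 - x2 - x3 + x4| ≤ |x1 - x2 - x3| + |x4| := abs_add_le _ _
    have h2 : |x1 - x2 - x3| ≤ |x1 - x2| + |x3| := abs_sub _ _
    have h3 : |x1 - x2| ≤ |x1| + |x2| := abs_sub _ _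
    linarith
  have hnum : |N2 u v a c 0 * s ^ 2 - 4 * N1 u v a c 0 * S1 u v 0 * s
      - 2 * N u v a c 0 * Q * s + 6 * N u v a c 0 * S1 u v 0 ^ 2| ≤
      (20 * ε ^ 2 + 24 * c * ε + 8 * c ^ 2) * (s ^ 3 * Q) := by
    have e1 : |N2 u v a c 0 * s ^ 2| = |N2 u v a c 0| * s ^ 2 := by
      rw [abs_mul, abs_pow, abs_of_pos hs]
    have e2 : |4 * N1 u v a c 0 * S1 u v 0 * s| =
        4 * |N1 u v a c 0| * |S1 u v 0| * s := by
      rw [abs_mul, abs_mul, abs_mul, abs_of_pos hs]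
      norm_num
    have e3 : |2 * N u v a c 0 * Q * s| = 2 * |N u v a c 0| * Q * s := by
      rw [abs_mul, abs_mul, abs_mul, abs_of_pos hs, abs_of_nonneg hQ0]
      norm_num
    have e4 : |6 * N u v a c 0 * S1 u v 0 ^ 2| = 6 * |N u v a c 0| * S1 u v 0 ^ 2 := by
      rw [abs_mul, abs_mul, abs_of_nonneg (sq_nonneg (S1 u v 0))]
      norm_num
    have b1 : |N2 u v a c 0| * s ^ 2 ≤
        2 * (2 * ε ^ 2 + 4 * c * ε + 4 * c ^ 2) * (Q * s) * s ^ 2 :=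
      mul_le_mul_of_nonneg_right hN2b (by positivity)
    have b2a : |N1 u v a c 0| * |S1 u v 0| ≤ (2 * (ε ^ 2 + 2 * c * ε) * (T * s)) * T :=
      mul_le_mul hN1b hS1b (abs_nonneg _) (by positivity)
    have b2 : 4 * |N1 u v a c 0| * |S1 u v 0| * s ≤
        8 * (ε ^ 2 + 2 * c * ε) * (s ^ 2 * T ^ 2) := by
      nlinarith [mul_le_mul_of_nonneg_right b2a (show (0:ℝ) ≤ 4 * s by positivity)]
    have b2' : 8 * (ε ^ 2 + 2 * c * ε) * (s ^ 2 * T ^ 2) ≤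
        8 * (ε ^ 2 + 2 * c * ε) * (s ^ 2 * (s * Q)) := by
      refine mul_le_mul_of_nonneg_left ?_ (by positivity)
      exact mul_le_mul_of_nonneg_left hCS (by positivity)
    have b3 : 2 * |N u v a c 0| * Q * s ≤ 2 * (ε ^ 2 * s ^ 2) * Q * s := by
      have := mul_le_mul_of_nonneg_right hNb
        (show (0:ℝ) ≤ 2 * Q * s by positivity)
      nlinarith [this]
    have b4 : 6 * |N u v a c 0| * S1 u v 0 ^ 2 ≤ 6 * (ε ^ 2 * s ^ 2) * (s * Q) := by
      have := mul_le_mul hNb hS1sq (sq_nonneg _) (by positivity)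
      nlinarith [this]
    have := htri (N2 u v a c 0 * s ^ 2) (4 * N1 u v a c 0 * S1 u v 0 * s)
      (2 * N u v a c 0 * Q * s) (6 * N u v a c 0 * S1 u v 0 ^ 2)
    rw [e1, e2, e3, e4] at this
    linarith [this, b1, b2, b2', b3, b4,
      (by ring : 2 * (2 * ε ^ 2 + 4 * c * ε + 4 * c ^ 2) * (Q * s) * s ^ 2
        + 8 * (ε ^ 2 + 2 * c * ε) * (s ^ 2 * (s * Q))
        + 2 * (ε ^ 2 * s ^ 2) * Q * s + 6 * (ε ^ 2 * s ^ 2) * (s * Q)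
        = (20 * ε ^ 2 + 24 * c * ε + 8 * c ^ 2) * (s ^ 3 * Q))]
  have hQsV : Q / s ≤ V := by
    rw [div_le_iff₀ hs]
    linarith [hQV]
  calc |G2 u v a c 0|
      = |N2 u v a c 0 * s ^ 2 - 4 * N1 u v a c 0 * S1 u v 0 * s
        - 2 * N u v a c 0 * Q * s + 6 * N u v a c 0 * S1 u v 0 ^ 2| / s ^ 4 := by
        rw [hG2eq, abs_div, abs_of_pos hs4]
    _ ≤ ((20 * ε ^ 2 + 24 * c * ε + 8 * c ^ 2) * (s ^ 3 * Q)) / s ^ 4 := by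
        gcongr
    _ = (20 * ε ^ 2 + 24 * c * ε + 8 * c ^ 2) * (Q / s) := by
        field_simp
    _ ≤ (20 * ε ^ 2 + 24 * c * ε + 8 * c ^ 2) * V :=
        mul_le_mul_of_nonneg_left hQsV hK0
    _ ≤ (20 * ε ^ 2 + 32 * c * ε + 8 * c ^ 2) * V := by
        nlinarith [mul_nonneg (mul_nonneg hc hε) hV0]

end bound

lemma second_deriv_line {E' : Type*} [NormedAddCommGroup E'] [NormedSpace ℝ E']
    {f : E' → ℝ} (hf : ContDiff ℝ 2 f) (θ z : E') :
    fderiv ℝ (fderiv ℝ f) θ z z = deriv (deriv fun t : ℝ => f (θ + t • z)) 0 := by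
  have hγ : ∀ t : ℝ, HasDerivAt (fun s : ℝ => θ + s • z) z t := fun t => by
    simpa using ((hasDerivAt_id t).smul_const z).const_add θ
  have hdf : Differentiable ℝ f := hf.differentiable (by norm_num)
  have h1 : ∀ t : ℝ, HasDerivAt (fun s : ℝ => f (θ + s • z))
      (fderiv ℝ f (θ + t • z) z) t := fun t => by
    simpa [Function.comp_def] using
      (hdf (θ + t • z)).hasFDerivAt.comp_hasDerivAt t (hγ t)
  have e1 : (deriv fun t : ℝ => f (θ + t • z)) =
      fun t : ℝ => fderiv ℝ f (θ + t • z) z := funext fun t => (h1 t).deriv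
  rw [e1]
  have hf' : ContDiff ℝ 1 (fderiv ℝ f) := hf.fderiv_right (by norm_num)
  have h2 : HasDerivAt (fun t : ℝ => fderiv ℝ f (θ + t • z))
      (fderiv ℝ (fderiv ℝ f) θ z) 0 := by
    have h0 : HasFDerivAt (fderiv ℝ f) (fderiv ℝ (fderiv ℝ f) θ) (θ + (0:ℝ) • z) := by
      simpa using ((hf'.differentiable one_ne_zero) θ).hasFDerivAt
    simpa [Function.comp_def] using h0.comp_hasDerivAt 0 (hγ 0)
  have h4 : HasDerivAt (fun t : ℝ => fderiv ℝ f (θ + t • z) z)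
      (fderiv ℝ (fderiv ℝ f) θ z z) 0 := by
    simpa using h2.clm_apply (hasDerivAt_const (0:ℝ) z)
  exact h4.deriv.symm

end RDA18



/-- The Reward-Difference-Approximation loss of the softmax-parametrized
policy satisfies, at every θ whose implicit reward differences are within ε₂ of the
true reward differences, the second-derivative bound
|D²L(θ)(z,z)| ≤ (20ε₂² + 32ε₂/τ + 8/τ²)·Σ_{x,y} z(x,y)². -/
theorem reward_difference_approximation_loss_smooth
    {X Y : Type*} [Fintype X] [Fintype Y] [Nonempty X] [Nonempty Y]
    (r : X → Y → ℝ) (τ : ℝ) (hτ : 0 < τ)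
    (D : X → ℝ) (hD0 : ∀ x, 0 ≤ D x) (hD1 : ∑ x : X, D x = 1)
    (πθ : (X × Y → ℝ) → X → Y → ℝ)
    (hπθ : ∀ θ x y, πθ θ x y = Real.exp (θ (x, y)) / ∑ y' : Y, Real.exp (θ (x, y')))
    (L : (X × Y → ℝ) → ℝ)
    (hL : ∀ θ, L θ = ∑ x : X, D x * ∑ y₁ : Y, ∑ y₂ : Y,
      πθ θ x y₁ * πθ θ x y₂ *
        ((1 / τ) * Real.log (πθ θ x y₁ / πθ θ x y₂) - (r x y₁ - r x y₂)) ^ 2)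
    (ε₂ : ℝ) (hε₂ : 0 ≤ ε₂)
    (θ : X × Y → ℝ)
    (hθ : ∀ x y₁ y₂,
      |(1 / τ) * Real.log (πθ θ x y₁ / πθ θ x y₂) - (r x y₁ - r x y₂)| ≤ ε₂) :
    ∀ z : X × Y → ℝ,
      |fderiv ℝ (fderiv ℝ L) θ z z| ≤
        (20 * ε₂ ^ 2 + 32 * ε₂ / τ + 8 / τ ^ 2) * ∑ p : X × Y, z p ^ 2 := by
  intro z
  classical
  have hc : (0:ℝ) ≤ 1 / τ := by positivity
  -- positivity of sums of exponentials
  have hSw : ∀ (w : X × Y → ℝ) (x : X), (0:ℝ) < ∑ y : Y, Real.exp (w (x, y)) :=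
    fun w x => Finset.sum_pos (fun y _ => Real.exp_pos _) Finset.univ_nonempty
  -- the log-ratio identity
  have hlog : ∀ (w : X × Y → ℝ) (x : X) (y₁ y₂ : Y),
      Real.log (πθ w x y₁ / πθ w x y₂) = w (x, y₁) - w (x, y₂) := by
    intro w x y₁ y₂
    rw [hπθ, hπθ]
    have hS := (hSw w x).ne'
    have : Real.exp (w (x, y₁)) / (∑ y' : Y, Real.exp (w (x, y'))) /
        (Real.exp (w (x, y₂)) / (∑ y' : Y, Real.exp (w (x, y')))) =
        Real.exp (w (x, y₁)) / Real.exp (w (x, y₂)) := by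
      field_simp
    rw [this, Real.log_div (Real.exp_ne_zero _) (Real.exp_ne_zero _),
      Real.log_exp, Real.log_exp]
  -- the explicit form of L
  set F : (X × Y → ℝ) → ℝ := fun w => ∑ x : X, D x *
    ((∑ y₁ : Y, ∑ y₂ : Y, Real.exp (w (x, y₁) + w (x, y₂)) *
      ((1 / τ) * (w (x, y₁) - w (x, y₂)) - (r x y₁ - r x y₂)) ^ 2) /
      (∑ y : Y, Real.exp (w (x, y))) ^ 2) with hF_def
  have hLF : L = F := by
    funext w
    rw [hL, hF_def]
    refine Finset.sum_congr rfl fun x _ => ?_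
    congr 1
    rw [Finset.sum_div]
    refine Finset.sum_congr rfl fun y₁ _ => ?_
    rw [Finset.sum_div]
    refine Finset.sum_congr rfl fun y₂ _ => ?_
    rw [hlog w x y₁ y₂, hπθ, hπθ, Real.exp_add]
    have hS := (hSw w x).ne'
    field_simp [hτ.ne']
  -- F is C²
  have hcoord : ∀ p : X × Y, ContDiff ℝ 2 (fun w : X × Y → ℝ => w p) := fun p =>
    (ContinuousLinearMap.proj p : (X × Y → ℝ) →L[ℝ] ℝ).contDiff
  have hF2 : ContDiff ℝ 2 F := by
    rw [hF_def]
    refine ContDiff.sum fun x _ => ContDiff.mul contDiff_const ?_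
    refine ContDiff.div ?_ ?_ ?_
    · refine ContDiff.sum fun y₁ _ => ContDiff.sum fun y₂ _ => ContDiff.mul ?_ ?_
      · exact Real.contDiff_exp.comp ((hcoord _).add (hcoord _))
      · exact (((contDiff_const.mul ((hcoord _).sub (hcoord _))).sub
          contDiff_const).pow 2)
    · exact (ContDiff.sum fun y _ => Real.contDiff_exp.comp (hcoord _)).pow 2
    · exact fun w => pow_ne_zero 2 (hSw w x).ne'
  -- restriction to the line θ + t z
  have hφ : ∀ t : ℝ, F (θ + t • z) = ∑ x : X, D x *
      (RDA18.N (fun y => θ (x, y)) (fun y => z (x, y))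
        (fun y₁ y₂ => (1 / τ) * (θ (x, y₁) - θ (x, y₂)) - (r x y₁ - r x y₂)) (1 / τ) t /
      RDA18.S (fun y => θ (x, y)) (fun y => z (x, y)) t ^ 2) := by
    intro t
    rw [hF_def]
    refine Finset.sum_congr rfl fun x _ => ?_
    have hden : (∑ y : Y, Real.exp ((θ + t • z) (x, y))) =
        RDA18.S (fun y => θ (x, y)) (fun y => z (x, y)) t := by
      unfold RDA18.S
      refine Finset.sum_congr rfl fun y _ => ?_
      simp [Pi.add_apply, Pi.smul_apply]
    have hnum : (∑ y₁ : Y, ∑ y₂ : Y, Real.exp ((θ + t • z) (x, y₁) + (θ + t • z) (x, y₂)) *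
        ((1 / τ) * ((θ + t • z) (x, y₁) - (θ + t • z) (x, y₂)) - (r x y₁ - r x y₂)) ^ 2) =
        RDA18.N (fun y => θ (x, y)) (fun y => z (x, y))
          (fun y₁ y₂ => (1 / τ) * (θ (x, y₁) - θ (x, y₂)) - (r x y₁ - r x y₂)) (1 / τ) t := by
      unfold RDA18.N
      refine Finset.sum_congr rfl fun y₁ _ => Finset.sum_congr rfl fun y₂ _ => ?_
      rw [show (θ + t • z) (x, y₁) + (θ + t • z) (x, y₂) =
          θ (x, y₁) + θ (x, y₂) + t * (z (x, y₁) + z (x, y₂)) by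
        simp only [Pi.add_apply, Pi.smul_apply, smul_eq_mul]; ring]
      rw [show (1 / τ) * ((θ + t • z) (x, y₁) - (θ + t • z) (x, y₂)) - (r x y₁ - r x y₂) =
          ((1 / τ) * (θ (x, y₁) - θ (x, y₂)) - (r x y₁ - r x y₂)) +
            (1 / τ) * t * (z (x, y₁) - z (x, y₂)) by
        simp only [Pi.add_apply, Pi.smul_apply, smul_eq_mul]; ring]
    rw [hnum, hden]
  have hfun : (fun t : ℝ => F (θ + t • z)) = fun t : ℝ => ∑ x : X, D x *
      (RDA18.N (fun y => θ (x, y)) (fun y => z (x, y))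
        (fun y₁ y₂ => (1 / τ) * (θ (x, y₁) - θ (x, y₂)) - (r x y₁ - r x y₂)) (1 / τ) t /
      RDA18.S (fun y => θ (x, y)) (fun y => z (x, y)) t ^ 2) := funext hφ
  -- first derivative along the line
  have hd1 : ∀ t : ℝ, HasDerivAt (fun t : ℝ => ∑ x : X, D x *
      (RDA18.N (fun y => θ (x, y)) (fun y => z (x, y))
        (fun y₁ y₂ => (1 / τ) * (θ (x, y₁) - θ (x, y₂)) - (r x y₁ - r x y₂)) (1 / τ) t /
      RDA18.S (fun y => θ (x, y)) (fun y => z (x, y)) t ^ 2))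
      (∑ x : X, D x * RDA18.G1 (fun y => θ (x, y)) (fun y => z (x, y))
        (fun y₁ y₂ => (1 / τ) * (θ (x, y₁) - θ (x, y₂)) - (r x y₁ - r x y₂)) (1 / τ) t) t :=
    fun t => HasDerivAt.fun_sum fun x _ =>
      (RDA18.hasDerivAt_G (fun y => θ (x, y)) (fun y => z (x, y)) _ (1 / τ) t).const_mul (D x)
  have hd2 : HasDerivAt (fun t : ℝ => ∑ x : X, D x *
      (RDA18.G1 (fun y => θ (x, y)) (fun y => z (x, y))
        (fun y₁ y₂ => (1 / τ) * (θ (x, y₁) - θ (x, y₂)) - (r x y₁ - r x y₂)) (1 / τ) t))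
      (∑ x : X, D x * RDA18.G2 (fun y => θ (x, y)) (fun y => z (x, y))
        (fun y₁ y₂ => (1 / τ) * (θ (x, y₁) - θ (x, y₂)) - (r x y₁ - r x y₂)) (1 / τ) 0) 0 :=
    HasDerivAt.fun_sum fun x _ =>
      (RDA18.hasDerivAt_G1 (fun y => θ (x, y)) (fun y => z (x, y)) _ (1 / τ) 0).const_mul (D x)
  have e2 : deriv (deriv fun t : ℝ => F (θ + t • z)) 0 =
      ∑ x : X, D x * RDA18.G2 (fun y => θ (x, y)) (fun y => z (x, y))
        (fun y₁ y₂ => (1 / τ) * (θ (x, y₁) - θ (x, y₂)) - (r x y₁ - r x y₂)) (1 / τ) 0 := by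
    rw [hfun]
    rw [show deriv (fun t : ℝ => ∑ x : X, D x *
        (RDA18.N (fun y => θ (x, y)) (fun y => z (x, y))
          (fun y₁ y₂ => (1 / τ) * (θ (x, y₁) - θ (x, y₂)) - (r x y₁ - r x y₂)) (1 / τ) t /
        RDA18.S (fun y => θ (x, y)) (fun y => z (x, y)) t ^ 2)) =
        fun t : ℝ => ∑ x : X, D x * RDA18.G1 (fun y => θ (x, y)) (fun y => z (x, y))
          (fun y₁ y₂ => (1 / τ) * (θ (x, y₁) - θ (x, y₂)) - (r x y₁ - r x y₂)) (1 / τ) t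
      from funext fun t => (hd1 t).deriv]
    exact hd2.deriv
  -- put things together
  rw [hLF, RDA18.second_deriv_line hF2 θ z, e2]
  -- bound the sum
  have hbx : ∀ x : X, |RDA18.G2 (fun y => θ (x, y)) (fun y => z (x, y))
      (fun y₁ y₂ => (1 / τ) * (θ (x, y₁) - θ (x, y₂)) - (r x y₁ - r x y₂)) (1 / τ) 0| ≤
      (20 * ε₂ ^ 2 + 32 * (1 / τ) * ε₂ + 8 * (1 / τ) ^ 2) * ∑ y : Y, z (x, y) ^ 2 := by
    intro x
    refine RDA18.G2_bound _ _ _ _ _ hc hε₂ fun y₁ y₂ => ?_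
    have h := hθ x y₁ y₂
    rwa [hlog θ x y₁ y₂] at h
  have hKeq : 20 * ε₂ ^ 2 + 32 * (1 / τ) * ε₂ + 8 * (1 / τ) ^ 2 =
      20 * ε₂ ^ 2 + 32 * ε₂ / τ + 8 / τ ^ 2 := by
    field_simp
  have hK0 : (0:ℝ) ≤ 20 * ε₂ ^ 2 + 32 * ε₂ / τ + 8 / τ ^ 2 := by positivity
  calc |∑ x : X, D x * RDA18.G2 (fun y => θ (x, y)) (fun y => z (x, y))
        (fun y₁ y₂ => (1 / τ) * (θ (x, y₁) - θ (x, y₂)) - (r x y₁ - r x y₂)) (1 / τ) 0|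
      ≤ ∑ x : X, |D x * RDA18.G2 (fun y => θ (x, y)) (fun y => z (x, y))
        (fun y₁ y₂ => (1 / τ) * (θ (x, y₁) - θ (x, y₂)) - (r x y₁ - r x y₂)) (1 / τ) 0| :=
        Finset.abs_sum_le_sum_abs _ _
    _ ≤ ∑ x : X, (20 * ε₂ ^ 2 + 32 * ε₂ / τ + 8 / τ ^ 2) * ∑ y : Y, z (x, y) ^ 2 := by
        refine Finset.sum_le_sum fun x _ => ?_
        rw [abs_mul, abs_of_nonneg (hD0 x)]
        have hDx : D x ≤ 1 := by
          rw [← hD1]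
          exact Finset.single_le_sum (fun x _ => hD0 x) (Finset.mem_univ x)
        have hb := hbx x
        rw [hKeq] at hb
        have hV0 : (0:ℝ) ≤ ∑ y : Y, z (x, y) ^ 2 :=
          Finset.sum_nonneg fun y _ => sq_nonneg _
        calc D x * |RDA18.G2 (fun y => θ (x, y)) (fun y => z (x, y))
              (fun y₁ y₂ => (1 / τ) * (θ (x, y₁) - θ (x, y₂)) - (r x y₁ - r x y₂)) (1 / τ) 0|
            ≤ D x * ((20 * ε₂ ^ 2 + 32 * ε₂ / τ + 8 / τ ^ 2) * ∑ y : Y, z (x, y) ^ 2) :=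
              mul_le_mul_of_nonneg_left hb (hD0 x)
          _ ≤ 1 * ((20 * ε₂ ^ 2 + 32 * ε₂ / τ + 8 / τ ^ 2) * ∑ y : Y, z (x, y) ^ 2) :=
              mul_le_mul_of_nonneg_right hDx (by positivity)
          _ = (20 * ε₂ ^ 2 + 32 * ε₂ / τ + 8 / τ ^ 2) * ∑ y : Y, z (x, y) ^ 2 := one_mul _
    _ = (20 * ε₂ ^ 2 + 32 * ε₂ / τ + 8 / τ ^ 2) * ∑ p : X × Y, z p ^ 2 := by
        rw [← Finset.mul_sum, Fintype.sum_prod_type]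
end

section
/- Consider the PRA loss of the softmax-parametrized policy under the Bradley–Terry comparison model: with p*(x,y₁,y₂) = σ(r(x,y₁) − r(x,y₂)), h_θ(x,y₁,y₂) = (1/τ)·log(π_θ(y₁|x)/π_θ(y₂|x)) and model probability p_θ(x,y₁,y₂) = σ(h_θ(x,y₁,y₂)), define L(θ) = Σ_{x∈X} 𝒟(x) · Σ_{y₁,y₂∈Y} π_θ(y₁|x)·π_θ(y₂|x) · [p*(x,y₁,y₂)·log(p*(x,y₁,y₂)/p_θ(x,y₁,y₂)) + (1 − p*(x,y₁,y₂))·log((1 − p*(x,y₁,y₂))/(1 − p_θ(x,y₁,y₂)))]. Let d ≥ 0 and ε₃ ≥ 0, and suppose θ satisfies |θ(x₁,y₁) − θ(x₂,y₂)| ≤ d for all x₁, x₂ ∈ X and y₁, y₂ ∈ Y, and |p*(x,y₁,y₂) − p_θ(x,y₁,y₂)| ≤ ε₃ for all x, y₁, y₂. Then the second derivative of L at θ satisfies |D²L(θ)(z,z)| ≤ (20·log(1 + e^{d/τ}) + 16·ε₃/τ + 4/τ² + 16·log 2)·Σ_{x,y} z(x,y)² for every direction z : X × Y → ℝ. -/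
open Real

noncomputable def sp (v : ℝ) : ℝ := Real.log (1 + Real.exp v)
noncomputable def sg (v : ℝ) : ℝ := Real.exp v / (1 + Real.exp v)
noncomputable def sgd (v : ℝ) : ℝ := Real.exp v / (1 + Real.exp v) ^ 2

lemma one_add_exp_pos (v : ℝ) : 0 < 1 + Real.exp v := by positivity

lemma hasDerivAt_sp (v : ℝ) : HasDerivAt sp (sg v) v := by
  have h : HasDerivAt (fun v : ℝ => 1 + Real.exp v) (Real.exp v) v :=
    (Real.hasDerivAt_exp v).const_add 1
  exact h.log (one_add_exp_pos v).ne'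

lemma hasDerivAt_sg (v : ℝ) : HasDerivAt sg (sgd v) v := by
  have h : HasDerivAt (fun v : ℝ => 1 + Real.exp v) (Real.exp v) v :=
    (Real.hasDerivAt_exp v).const_add 1
  have := (Real.hasDerivAt_exp v).div h (one_add_exp_pos v).ne'
  refine this.congr_deriv ?_
  rw [sgd]; field_simp; ring

lemma sg_neg (v : ℝ) : sg (-v) = 1 - sg v := by
  have h1 := (one_add_exp_pos v).ne'
  have h2 := (one_add_exp_pos (-v)).ne'
  rw [sg, sg, Real.exp_neg]
  field_simp
  ring

lemma sg_pos (v : ℝ) : 0 < sg v := by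
  have := one_add_exp_pos v
  exact div_pos (Real.exp_pos v) this

lemma sg_lt_one (v : ℝ) : sg v < 1 := by
  rw [sg, div_lt_one (one_add_exp_pos v)]; linarith [Real.exp_pos v]

lemma sp_nonneg (v : ℝ) : 0 ≤ sp v := by
  rw [sp]
  have : (1:ℝ) ≤ 1 + Real.exp v := by linarith [Real.exp_pos v]
  exact Real.log_nonneg this

lemma sp_mono {a b : ℝ} (h : a ≤ b) : sp a ≤ sp b := by
  apply Real.log_le_log (one_add_exp_pos a)
  have := Real.exp_le_exp.2 h
  linarith

lemma log_two_le_sp {a : ℝ} (h : 0 ≤ a) : Real.log 2 ≤ sp a := by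
  have := sp_mono h
  rw [sp, Real.exp_zero] at this
  norm_num at this
  exact this

lemma sgd_le (v : ℝ) : Real.exp v / (1 + Real.exp v)^2 ≤ 1/4 := by
  rw [div_le_iff₀ (by positivity)]
  nlinarith [sq_nonneg (1 - Real.exp v), Real.exp_pos v]

-- second derivative along a line
lemma second_deriv_line {E : Type*} [NormedAddCommGroup E] [NormedSpace ℝ E]
    (f : E → ℝ) (hf : ContDiff ℝ 2 f) (θ z : E) :
    fderiv ℝ (fderiv ℝ f) θ z z = deriv (deriv (fun t : ℝ => f (θ + t • z))) 0 := by
  have hdiff : Differentiable ℝ f := hf.differentiable (by norm_num)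
  have hfd : ContDiff ℝ 1 (fderiv ℝ f) := hf.fderiv_right (by norm_num)
  have hc : ∀ t : ℝ, HasDerivAt (fun t : ℝ => θ + t • z) z t := by
    intro t
    simpa using ((hasDerivAt_id t).smul_const z).const_add θ
  have h1 : ∀ t : ℝ, HasDerivAt (fun t : ℝ => f (θ + t • z)) (fderiv ℝ f (θ + t • z) z) t := by
    intro t
    exact ((hdiff (θ + t • z)).hasFDerivAt.comp_hasDerivAt t (hc t))
  have h2 : deriv (fun t : ℝ => f (θ + t • z)) = fun t => fderiv ℝ f (θ + t • z) z :=
    funext fun t => (h1 t).deriv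
  rw [h2]
  have h3 : HasDerivAt (fun t : ℝ => fderiv ℝ f (θ + t • z) z)
      (fderiv ℝ (fderiv ℝ f) θ z z) 0 := by
    have happ : HasFDerivAt (fun w : E => fderiv ℝ f w z)
        ((ContinuousLinearMap.apply ℝ ℝ z).comp (fderiv ℝ (fderiv ℝ f) θ)) θ :=
      (ContinuousLinearMap.apply ℝ ℝ z).hasFDerivAt.comp θ
        ((hfd.differentiable (by norm_num)) θ).hasFDerivAt
    rw [show θ = θ + (0:ℝ) • z by simp] at happ
    have := happ.comp_hasDerivAt 0 (hc 0)
    simp at this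
    exact this
  exact h3.deriv.symm

lemma entropy_bounds {s : ℝ} (h0 : 0 < s) (h1 : s < 1) :
    -Real.log 2 ≤ s * Real.log s + (1 - s) * Real.log (1 - s) ∧
    s * Real.log s + (1 - s) * Real.log (1 - s) ≤ 0 := by
  have hs' : (0:ℝ) < 1 - s := by linarith
  constructor
  · have ha := Real.one_sub_inv_le_log_of_pos (show (0:ℝ) < 2 * s by linarith)
    have hb := Real.one_sub_inv_le_log_of_pos (show (0:ℝ) < 2 * (1 - s) by linarith)
    have ha' : Real.log (2 * s) = Real.log 2 + Real.log s :=
      Real.log_mul (by norm_num) h0.ne'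
    have hb' : Real.log (2 * (1 - s)) = Real.log 2 + Real.log (1 - s) :=
      Real.log_mul (by norm_num) hs'.ne'
    rw [ha'] at ha; rw [hb'] at hb
    have h2 : (2 * s)⁻¹ = 1 / (2 * s) := by ring
    have h3 : (2 * (1 - s))⁻¹ = 1 / (2 * (1 - s)) := by ring
    rw [h2] at ha; rw [h3] at hb
    have ka : s * (1 - 1 / (2 * s)) ≤ s * (Real.log 2 + Real.log s) :=
      mul_le_mul_of_nonneg_left ha h0.le
    have kb : (1 - s) * (1 - 1 / (2 * (1 - s))) ≤ (1 - s) * (Real.log 2 + Real.log (1 - s)) :=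
      mul_le_mul_of_nonneg_left hb hs'.le
    have ea : s * (1 - 1 / (2 * s)) = s - 1/2 := by field_simp
    have eb : (1 - s) * (1 - 1 / (2 * (1 - s))) = (1 - s) - 1/2 := by field_simp
    nlinarith
  · have la : Real.log s ≤ 0 := Real.log_nonpos h0.le h1.le
    have lb : Real.log (1 - s) ≤ 0 := Real.log_nonpos hs'.le (by linarith)
    nlinarith

lemma kl_identity {s t : ℝ} (h0 : 0 < s) (h1 : s < 1) :
    s * Real.log (s / (1 + Real.exp (-t))⁻¹) +
      (1 - s) * Real.log ((1 - s) / (1 - (1 + Real.exp (-t))⁻¹)) =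
    (s * Real.log s + (1 - s) * Real.log (1 - s)) + s * sp (-t) + (1 - s) * sp t := by
  have hpos := one_add_exp_pos (-t)
  have hq : (0:ℝ) < (1 + Real.exp (-t))⁻¹ := inv_pos.2 hpos
  have h1q : 1 - (1 + Real.exp (-t))⁻¹ = Real.exp (-t) / (1 + Real.exp (-t)) := by
    field_simp
    ring
  have h1qpos : (0:ℝ) < 1 - (1 + Real.exp (-t))⁻¹ := by
    rw [h1q]; positivity
  have hs' : (0:ℝ) < 1 - s := by linarith
  rw [Real.log_div h0.ne' hq.ne', Real.log_div hs'.ne' h1qpos.ne']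
  rw [Real.log_inv, h1q, Real.log_div (Real.exp_pos _).ne' hpos.ne', Real.log_exp]
  have hsp : sp t = t + sp (-t) := by
    rw [sp, sp]
    have : (1:ℝ) + Real.exp t = Real.exp t * (1 + Real.exp (-t)) := by
      rw [mul_add, mul_one, ← Real.exp_add, add_neg_cancel, Real.exp_zero]; ring
    rw [this, Real.log_mul (Real.exp_pos t).ne' hpos.ne', Real.log_exp]
  rw [sp, hsp, sp]
  ring

set_option linter.unusedSectionVars false

section PerX
variable {Y : Type*} [Fintype Y]

noncomputable def pe (a w : Y → ℝ) (y : Y) (t : ℝ) : ℝ := Real.exp (a y + t * w y)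
noncomputable def pZ (a w : Y → ℝ) (t : ℝ) : ℝ := ∑ y : Y, pe a w y t
noncomputable def pZ1 (a w : Y → ℝ) (t : ℝ) : ℝ := ∑ y : Y, pe a w y t * w y
noncomputable def pZ2 (a w : Y → ℝ) (t : ℝ) : ℝ := ∑ y : Y, pe a w y t * w y ^ 2
noncomputable def pu (a w : Y → ℝ) (y1 y2 : Y) (t : ℝ) : ℝ :=
  a y1 + t * w y1 - (a y2 + t * w y2)
noncomputable def pG (τ : ℝ) (C s : Y → Y → ℝ) (a w : Y → ℝ) (y1 y2 : Y) (t : ℝ) : ℝ :=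
  C y1 y2 + s y1 y2 * sp (-(pu a w y1 y2 t / τ)) + (1 - s y1 y2) * sp (pu a w y1 y2 t / τ)
noncomputable def pG1 (τ : ℝ) (s : Y → Y → ℝ) (a w : Y → ℝ) (y1 y2 : Y) (t : ℝ) : ℝ :=
  (sg (pu a w y1 y2 t / τ) - s y1 y2) * (w y1 - w y2) / τ
noncomputable def pG2 (τ : ℝ) (a w : Y → ℝ) (y1 y2 : Y) (t : ℝ) : ℝ :=
  sgd (pu a w y1 y2 t / τ) * (w y1 - w y2) ^ 2 / τ ^ 2
noncomputable def pB (τ : ℝ) (C s : Y → Y → ℝ) (a w : Y → ℝ) (y1 y2 : Y) (t : ℝ) : ℝ :=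
  pe a w y1 t * pe a w y2 t * pG τ C s a w y1 y2 t
noncomputable def pB1 (τ : ℝ) (C s : Y → Y → ℝ) (a w : Y → ℝ) (y1 y2 : Y) (t : ℝ) : ℝ :=
  pe a w y1 t * pe a w y2 t *
    ((w y1 + w y2) * pG τ C s a w y1 y2 t + pG1 τ s a w y1 y2 t)
noncomputable def pB2 (τ : ℝ) (C s : Y → Y → ℝ) (a w : Y → ℝ) (y1 y2 : Y) (t : ℝ) : ℝ :=
  pe a w y1 t * pe a w y2 t *
    ((w y1 + w y2) ^ 2 * pG τ C s a w y1 y2 t + 2 * (w y1 + w y2) * pG1 τ s a w y1 y2 t +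
      pG2 τ a w y1 y2 t)
noncomputable def pA1 (τ : ℝ) (C s : Y → Y → ℝ) (a w : Y → ℝ) (y1 y2 : Y) (t : ℝ) : ℝ :=
  (pB1 τ C s a w y1 y2 t * pZ a w t - 2 * (pB τ C s a w y1 y2 t * pZ1 a w t)) / pZ a w t ^ 3
noncomputable def pF (τ : ℝ) (C s : Y → Y → ℝ) (a w : Y → ℝ) (t : ℝ) : ℝ :=
  ∑ y1 : Y, ∑ y2 : Y, pe a w y1 t / pZ a w t * (pe a w y2 t / pZ a w t) * pG τ C s a w y1 y2 t
noncomputable def pF1 (τ : ℝ) (C s : Y → Y → ℝ) (a w : Y → ℝ) (t : ℝ) : ℝ :=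
  ∑ y1 : Y, ∑ y2 : Y, pA1 τ C s a w y1 y2 t
noncomputable def pBr (τ : ℝ) (C s : Y → Y → ℝ) (a w : Y → ℝ) (y1 y2 : Y) : ℝ :=
  (w y1 + w y2) ^ 2 * pG τ C s a w y1 y2 0 + 2 * (w y1 + w y2) * pG1 τ s a w y1 y2 0 +
    pG2 τ a w y1 y2 0 -
    4 * (pZ1 a w 0 / pZ a w 0) *
      ((w y1 + w y2) * pG τ C s a w y1 y2 0 + pG1 τ s a w y1 y2 0) -
    2 * pG τ C s a w y1 y2 0 * (pZ2 a w 0 / pZ a w 0) +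
    6 * pG τ C s a w y1 y2 0 * (pZ1 a w 0 / pZ a w 0) ^ 2
noncomputable def pc2 (τ : ℝ) (C s : Y → Y → ℝ) (a w : Y → ℝ) : ℝ :=
  ∑ y1 : Y, ∑ y2 : Y, pe a w y1 0 / pZ a w 0 * (pe a w y2 0 / pZ a w 0) * pBr τ C s a w y1 y2

variable (τ : ℝ) (C s : Y → Y → ℝ) (a w : Y → ℝ)

lemma pe_pos (y : Y) (t : ℝ) : 0 < pe a w y t := Real.exp_pos _

lemma hasDerivAt_pe (y : Y) (t : ℝ) : HasDerivAt (pe a w y) (pe a w y t * w y) t := by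
  have h : HasDerivAt (fun t : ℝ => a y + t * w y) (w y) t := by
    simpa using (hasDerivAt_mul_const (w y)).const_add (a y)
  exact h.exp

lemma pZ_pos [Nonempty Y] (t : ℝ) : 0 < pZ a w t :=
  Finset.sum_pos (fun y _ => pe_pos a w y t) Finset.univ_nonempty

lemma hasDerivAt_pZ (t : ℝ) : HasDerivAt (pZ a w) (pZ1 a w t) t := by
  unfold pZ pZ1
  exact HasDerivAt.fun_sum fun y _ => hasDerivAt_pe a w y t

lemma hasDerivAt_pZ1 (t : ℝ) : HasDerivAt (pZ1 a w) (pZ2 a w t) t := by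
  unfold pZ1 pZ2
  have := HasDerivAt.fun_sum (fun y (_ : y ∈ Finset.univ) => (hasDerivAt_pe a w y t).mul_const (w y))
  refine this.congr_deriv ?_
  apply Finset.sum_congr rfl
  intro y _
  ring

lemma hasDerivAt_pu (y1 y2 : Y) (t : ℝ) :
    HasDerivAt (pu a w y1 y2) (w y1 - w y2) t := by
  unfold pu
  have h1 : HasDerivAt (fun t : ℝ => a y1 + t * w y1) (w y1) t := by
    simpa using (hasDerivAt_mul_const (w y1)).const_add (a y1)
  have h2 : HasDerivAt (fun t : ℝ => a y2 + t * w y2) (w y2) t := by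
    simpa using (hasDerivAt_mul_const (w y2)).const_add (a y2)
  exact h1.sub h2

lemma hasDerivAt_pG (hτ : τ ≠ 0) (y1 y2 : Y) (t : ℝ) :
    HasDerivAt (pG τ C s a w y1 y2) (pG1 τ s a w y1 y2 t) t := by
  have hu := hasDerivAt_pu a w y1 y2 t
  have hv : HasDerivAt (fun t => pu a w y1 y2 t / τ) ((w y1 - w y2) / τ) t := hu.div_const τ
  have hnv : HasDerivAt (fun t => -(pu a w y1 y2 t / τ)) (-((w y1 - w y2) / τ)) t := hv.neg
  have h1 : HasDerivAt (fun t => sp (-(pu a w y1 y2 t / τ)))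
      (sg (-(pu a w y1 y2 t / τ)) * -((w y1 - w y2) / τ)) t :=
    (hasDerivAt_sp _).comp t hnv
  have h2 : HasDerivAt (fun t => sp (pu a w y1 y2 t / τ))
      (sg (pu a w y1 y2 t / τ) * ((w y1 - w y2) / τ)) t :=
    (hasDerivAt_sp _).comp t hv
  have h := ((h1.const_mul (s y1 y2)).add (h2.const_mul (1 - s y1 y2))).const_add (C y1 y2)
  have hG : pG τ C s a w y1 y2 = fun t => C y1 y2 +
      (s y1 y2 * sp (-(pu a w y1 y2 t / τ)) + (1 - s y1 y2) * sp (pu a w y1 y2 t / τ)) := by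
    funext t; rw [pG]; ring
  rw [hG]
  refine h.congr_deriv ?_
  rw [pG1, sg_neg]
  field_simp
  ring

lemma hasDerivAt_pG1 (hτ : τ ≠ 0) (y1 y2 : Y) (t : ℝ) :
    HasDerivAt (pG1 τ s a w y1 y2) (pG2 τ a w y1 y2 t) t := by
  have hv : HasDerivAt (fun t => pu a w y1 y2 t / τ) ((w y1 - w y2) / τ) t :=
    (hasDerivAt_pu a w y1 y2 t).div_const τ
  have h1 : HasDerivAt (fun t => sg (pu a w y1 y2 t / τ))
      (sgd (pu a w y1 y2 t / τ) * ((w y1 - w y2) / τ)) t := (hasDerivAt_sg _).comp t hv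
  have h := ((h1.sub_const (s y1 y2)).mul_const (w y1 - w y2)).div_const τ
  have : pG1 τ s a w y1 y2 = fun t =>
      (sg (pu a w y1 y2 t / τ) - s y1 y2) * (w y1 - w y2) / τ := rfl
  rw [this]
  refine h.congr_deriv ?_
  rw [pG2]
  field_simp

lemma hasDerivAt_pB (hτ : τ ≠ 0) (y1 y2 : Y) (t : ℝ) :
    HasDerivAt (pB τ C s a w y1 y2) (pB1 τ C s a w y1 y2 t) t := by
  have h := ((hasDerivAt_pe a w y1 t).mul (hasDerivAt_pe a w y2 t)).mul
    (hasDerivAt_pG τ C s a w hτ y1 y2 t)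
  have hB : pB τ C s a w y1 y2 = fun t =>
      pe a w y1 t * pe a w y2 t * pG τ C s a w y1 y2 t := rfl
  rw [hB]
  refine h.congr_deriv ?_
  simp only [Pi.mul_apply, Pi.div_apply, Pi.add_apply, Pi.sub_apply, Pi.pow_apply, Nat.cast_ofNat]
  rw [pB1]
  ring

lemma hasDerivAt_pB1 (hτ : τ ≠ 0) (y1 y2 : Y) (t : ℝ) :
    HasDerivAt (pB1 τ C s a w y1 y2) (pB2 τ C s a w y1 y2 t) t := by
  have h := ((hasDerivAt_pe a w y1 t).mul (hasDerivAt_pe a w y2 t)).mul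
    (((hasDerivAt_pG τ C s a w hτ y1 y2 t).const_mul (w y1 + w y2)).add
      (hasDerivAt_pG1 τ s a w hτ y1 y2 t))
  have hB : pB1 τ C s a w y1 y2 = fun t =>
      pe a w y1 t * pe a w y2 t *
        ((w y1 + w y2) * pG τ C s a w y1 y2 t + pG1 τ s a w y1 y2 t) := rfl
  rw [hB]
  refine h.congr_deriv ?_
  simp only [Pi.mul_apply, Pi.div_apply, Pi.add_apply, Pi.sub_apply, Pi.pow_apply, Nat.cast_ofNat]
  rw [pB2]
  ring

lemma hasDerivAt_pF [Nonempty Y] (hτ : τ ≠ 0) (t : ℝ) :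
    HasDerivAt (pF τ C s a w) (pF1 τ C s a w t) t := by
  unfold pF pF1
  apply HasDerivAt.fun_sum
  intro y1 _
  apply HasDerivAt.fun_sum
  intro y2 _
  have hZ0 := (pZ_pos a w t).ne'
  have h := (((hasDerivAt_pe a w y1 t).div (hasDerivAt_pZ a w t) hZ0).mul
    ((hasDerivAt_pe a w y2 t).div (hasDerivAt_pZ a w t) hZ0)).mul
    (hasDerivAt_pG τ C s a w hτ y1 y2 t)
  refine h.congr_deriv ?_
  simp only [Pi.mul_apply, Pi.div_apply, Pi.add_apply, Pi.sub_apply, Pi.pow_apply, Nat.cast_ofNat]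
  rw [pA1, pB1, pB]
  field_simp
  ring

lemma hasDerivAt_pF1 [Nonempty Y] (hτ : τ ≠ 0) :
    HasDerivAt (pF1 τ C s a w) (pc2 τ C s a w) 0 := by
  unfold pF1 pc2
  apply HasDerivAt.fun_sum
  intro y1 _
  apply HasDerivAt.fun_sum
  intro y2 _
  have hZ0 := (pZ_pos a w 0).ne'
  have hZ3 : pZ a w 0 ^ 3 ≠ 0 := pow_ne_zero 3 hZ0
  have hnum := ((hasDerivAt_pB1 τ C s a w hτ y1 y2 0).mul (hasDerivAt_pZ a w 0)).sub
    (((hasDerivAt_pB τ C s a w hτ y1 y2 0).mul (hasDerivAt_pZ1 a w 0)).const_mul 2)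
  have hden := (hasDerivAt_pZ a w 0).pow 3
  have h := hnum.div hden hZ3
  have hA : pA1 τ C s a w y1 y2 = fun t =>
      (pB1 τ C s a w y1 y2 t * pZ a w t - 2 * (pB τ C s a w y1 y2 t * pZ1 a w t)) /
        pZ a w t ^ 3 := rfl
  rw [hA]
  refine h.congr_deriv ?_
  simp only [Pi.mul_apply, Pi.div_apply, Pi.add_apply, Pi.sub_apply, Pi.pow_apply, Nat.cast_ofNat]
  unfold pBr pB2 pB1 pB
  field_simp
  ring

lemma pu_zero (y1 y2 : Y) : pu a w y1 y2 0 = a y1 - a y2 := by simp [pu]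

lemma pG_bound (hτ : 0 < τ) (d : ℝ) (hd : 0 ≤ d)
    (hdiam : ∀ y1 y2, |a y1 - a y2| ≤ d)
    (hC1 : ∀ y1 y2, -Real.log 2 ≤ C y1 y2) (hC2 : ∀ y1 y2, C y1 y2 ≤ 0)
    (hs0 : ∀ y1 y2, 0 ≤ s y1 y2) (hs1 : ∀ y1 y2, s y1 y2 ≤ 1) (y1 y2 : Y) :
    |pG τ C s a w y1 y2 0| ≤ sp (d / τ) := by
  have hu := pu_zero a w y1 y2
  have habs : |pu a w y1 y2 0 / τ| ≤ d / τ := by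
    rw [hu, abs_div, abs_of_pos hτ]
    exact div_le_div_of_nonneg_right (hdiam y1 y2) hτ.le |>.trans_eq rfl
  have h1 : sp (-(pu a w y1 y2 0 / τ)) ≤ sp (d / τ) :=
    sp_mono ((neg_le_abs _).trans habs)
  have h2 : sp (pu a w y1 y2 0 / τ) ≤ sp (d / τ) :=
    sp_mono ((le_abs_self _).trans habs)
  have hMg : 0 ≤ sp (d / τ) := sp_nonneg _
  have hlog2 : Real.log 2 ≤ sp (d / τ) := log_two_le_sp (by positivity)
  rw [abs_le, pG]
  constructor
  · have a1 : 0 ≤ s y1 y2 * sp (-(pu a w y1 y2 0 / τ)) :=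
      mul_nonneg (hs0 y1 y2) (sp_nonneg _)
    have a2 : 0 ≤ (1 - s y1 y2) * sp (pu a w y1 y2 0 / τ) :=
      mul_nonneg (by linarith [hs1 y1 y2]) (sp_nonneg _)
    have := hC1 y1 y2
    linarith
  · have a1 : s y1 y2 * sp (-(pu a w y1 y2 0 / τ)) ≤ s y1 y2 * sp (d / τ) :=
      mul_le_mul_of_nonneg_left h1 (hs0 y1 y2)
    have a2 : (1 - s y1 y2) * sp (pu a w y1 y2 0 / τ) ≤ (1 - s y1 y2) * sp (d / τ) :=
      mul_le_mul_of_nonneg_left h2 (by linarith [hs1 y1 y2])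
    have := hC2 y1 y2
    nlinarith

lemma pG1_bound (hτ : 0 < τ) (ε M : ℝ) (hM : 0 ≤ M)
    (hw : ∀ y, |w y| ≤ M)
    (hclose : ∀ y1 y2, |s y1 y2 - sg ((a y1 - a y2) / τ)| ≤ ε) (y1 y2 : Y) :
    |pG1 τ s a w y1 y2 0| ≤ 2 * M * ε / τ := by
  rw [pG1, pu_zero, abs_div, abs_of_pos hτ, abs_mul]
  apply div_le_div_of_nonneg_right _ hτ.le |>.trans_eq rfl
  have h1 : |sg ((a y1 - a y2) / τ) - s y1 y2| ≤ ε := by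
    rw [abs_sub_comm]; exact hclose y1 y2
  have h2 : |w y1 - w y2| ≤ 2 * M := by
    calc |w y1 - w y2| ≤ |w y1| + |w y2| := abs_sub _ _
    _ ≤ 2 * M := by linarith [hw y1, hw y2]
  calc |sg ((a y1 - a y2) / τ) - s y1 y2| * |w y1 - w y2| ≤ ε * (2 * M) :=
        mul_le_mul h1 h2 (abs_nonneg _) ((abs_nonneg _).trans h1)
  _ = 2 * M * ε := by ring

lemma sgd_nonneg (v : ℝ) : 0 ≤ sgd v := by rw [sgd]; positivity

lemma pG2_bound (hτ : 0 < τ) (M : ℝ) (hM : 0 ≤ M) (hw : ∀ y, |w y| ≤ M) (y1 y2 : Y) :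
    |pG2 τ a w y1 y2 0| ≤ M ^ 2 / τ ^ 2 := by
  rw [pG2, abs_div, abs_of_pos (by positivity : (0:ℝ) < τ ^ 2), abs_mul]
  apply div_le_div_of_nonneg_right _ (by positivity) |>.trans_eq rfl
  have h2 : |w y1 - w y2| ≤ 2 * M := by
    calc |w y1 - w y2| ≤ |w y1| + |w y2| := abs_sub _ _
    _ ≤ 2 * M := by linarith [hw y1, hw y2]
  have h3 : |(w y1 - w y2) ^ 2| ≤ 4 * M ^ 2 := by
    rw [abs_of_nonneg (sq_nonneg _), ← sq_abs]
    nlinarith [abs_nonneg (w y1 - w y2)]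
  have h4 : |sgd (pu a w y1 y2 0 / τ)| ≤ 1 / 4 := by
    rw [abs_of_nonneg (sgd_nonneg _)]
    exact sgd_le _
  calc |sgd (pu a w y1 y2 0 / τ)| * |(w y1 - w y2) ^ 2| ≤ 1 / 4 * (4 * M ^ 2) :=
        mul_le_mul h4 h3 (abs_nonneg _) (by norm_num)
  _ = M ^ 2 := by ring

lemma pZ1_div_bound [Nonempty Y] (M : ℝ) (hw : ∀ y, |w y| ≤ M) :
    |pZ1 a w 0 / pZ a w 0| ≤ M := by
  have hZ := pZ_pos a w (0:ℝ)
  rw [abs_div, abs_of_pos hZ, div_le_iff₀ hZ]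
  calc |pZ1 a w 0| ≤ ∑ y : Y, |pe a w y 0 * w y| := Finset.abs_sum_le_sum_abs _ _
  _ ≤ ∑ y : Y, pe a w y 0 * M := by
      apply Finset.sum_le_sum
      intro y _
      rw [abs_mul, abs_of_pos (pe_pos a w y 0)]
      exact mul_le_mul_of_nonneg_left (hw y) (pe_pos a w y 0).le
  _ = M * pZ a w 0 := by rw [pZ, ← Finset.sum_mul]; ring

lemma pZ2_div_bound [Nonempty Y] (M : ℝ) (hw : ∀ y, |w y| ≤ M) :
    0 ≤ pZ2 a w 0 / pZ a w 0 ∧ pZ2 a w 0 / pZ a w 0 ≤ M ^ 2 := by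
  have hZ := pZ_pos a w (0:ℝ)
  constructor
  · apply div_nonneg _ hZ.le
    exact Finset.sum_nonneg fun y _ => mul_nonneg (pe_pos a w y 0).le (sq_nonneg _)
  · rw [div_le_iff₀ hZ]
    calc pZ2 a w 0 ≤ ∑ y : Y, pe a w y 0 * M ^ 2 := by
          apply Finset.sum_le_sum
          intro y _
          apply mul_le_mul_of_nonneg_left _ (pe_pos a w y 0).le
          rw [← sq_abs]
          exact pow_le_pow_left₀ (abs_nonneg _) (hw y) 2
    _ = M ^ 2 * pZ a w 0 := by rw [pZ, ← Finset.sum_mul]; ring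

lemma abs_six (x1 x2 x3 x4 x5 x6 : ℝ) :
    |x1 + x2 + x3 - x4 - x5 + x6| ≤ |x1| + |x2| + |x3| + |x4| + |x5| + |x6| := by
  have h1 := abs_add_le (x1 + x2 + x3 - x4 - x5) x6
  have h2 := abs_sub (x1 + x2 + x3 - x4) x5
  have h3 := abs_sub (x1 + x2 + x3) x4
  have h4 := abs_add_le (x1 + x2) x3
  have h5 := abs_add_le x1 x2
  linarith

lemma bracket_abs_bound (g g1 g2 W Q A Mg Me MT M : ℝ)
    (hg : |g| ≤ Mg) (hg1 : |g1| ≤ Me) (hg2 : |g2| ≤ MT) (hW : |W| ≤ M)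
    (hQ0 : 0 ≤ Q) (hQ : Q ≤ M ^ 2) (hA : |A| ≤ 2 * M)
    (hM : 0 ≤ M) (hMg : 0 ≤ Mg) (hMe : 0 ≤ Me) :
    |A ^ 2 * g + 2 * A * g1 + g2 - 4 * W * (A * g + g1) - 2 * g * Q + 6 * g * W ^ 2| ≤
      20 * Mg * M ^ 2 + 8 * M * Me + MT := by
  have hA2 : A ^ 2 ≤ 4 * M ^ 2 := by nlinarith [sq_abs A, abs_nonneg A]
  have hW2 : W ^ 2 ≤ M ^ 2 := by nlinarith [sq_abs W, abs_nonneg W]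
  have hT1 : |A ^ 2 * g| ≤ 4 * M ^ 2 * Mg := by
    rw [abs_mul, abs_of_nonneg (sq_nonneg A)]
    exact mul_le_mul hA2 hg (abs_nonneg g) (by positivity)
  have hT2 : |2 * A * g1| ≤ 4 * M * Me := by
    rw [abs_mul, abs_mul, show |(2:ℝ)| = 2 by norm_num]
    nlinarith [mul_le_mul hA hg1 (abs_nonneg g1) (by positivity : (0:ℝ) ≤ 2 * M)]
  have hin : |A * g + g1| ≤ 2 * M * Mg + Me := by
    have := abs_add_le (A * g) g1
    have hag : |A * g| ≤ 2 * M * Mg := by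
      rw [abs_mul]
      exact mul_le_mul hA hg (abs_nonneg g) (by positivity)
    linarith
  have hT4 : |4 * W * (A * g + g1)| ≤ 8 * M ^ 2 * Mg + 4 * M * Me := by
    rw [abs_mul, abs_mul, show |(4:ℝ)| = 4 by norm_num]
    nlinarith [mul_le_mul hW hin (abs_nonneg (A * g + g1)) hM, abs_nonneg W]
  have hT5 : |2 * g * Q| ≤ 2 * Mg * M ^ 2 := by
    rw [abs_mul, abs_mul, show |(2:ℝ)| = 2 by norm_num, abs_of_nonneg hQ0]
    nlinarith [mul_le_mul hg hQ hQ0 hMg, abs_nonneg g]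
  have hT6 : |6 * g * W ^ 2| ≤ 6 * Mg * M ^ 2 := by
    rw [abs_mul, abs_mul, show |(6:ℝ)| = 6 by norm_num, abs_of_nonneg (sq_nonneg W)]
    nlinarith [mul_le_mul hg hW2 (sq_nonneg W) hMg, abs_nonneg g]
  have := abs_six (A ^ 2 * g) (2 * A * g1) g2 (4 * W * (A * g + g1)) (2 * g * Q)
    (6 * g * W ^ 2)
  linarith

lemma pBr_bound [Nonempty Y] (hτ : 0 < τ) (d ε M : ℝ) (hd : 0 ≤ d) (hε : 0 ≤ ε) (hM : 0 ≤ M)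
    (hw : ∀ y, |w y| ≤ M)
    (hdiam : ∀ y1 y2, |a y1 - a y2| ≤ d)
    (hclose : ∀ y1 y2, |s y1 y2 - sg ((a y1 - a y2) / τ)| ≤ ε)
    (hC1 : ∀ y1 y2, -Real.log 2 ≤ C y1 y2) (hC2 : ∀ y1 y2, C y1 y2 ≤ 0)
    (hs0 : ∀ y1 y2, 0 ≤ s y1 y2) (hs1 : ∀ y1 y2, s y1 y2 ≤ 1) (y1 y2 : Y) :
    |pBr τ C s a w y1 y2| ≤ (20 * sp (d / τ) + 16 * ε / τ + 1 / τ ^ 2) * M ^ 2 := by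
  have hg := pG_bound τ C s a w hτ d hd hdiam hC1 hC2 hs0 hs1 y1 y2
  have hg1 := pG1_bound τ s a w hτ ε M hM hw hclose y1 y2
  have hg2 := pG2_bound τ a w hτ M hM hw y1 y2
  have hW := pZ1_div_bound a w M hw
  obtain ⟨hQ0, hQ⟩ := pZ2_div_bound a w M hw
  have hA : |w y1 + w y2| ≤ 2 * M := by
    calc |w y1 + w y2| ≤ |w y1| + |w y2| := abs_add_le _ _
    _ ≤ 2 * M := by linarith [hw y1, hw y2]
  have key := bracket_abs_bound (pG τ C s a w y1 y2 0) (pG1 τ s a w y1 y2 0)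
    (pG2 τ a w y1 y2 0) (pZ1 a w 0 / pZ a w 0) (pZ2 a w 0 / pZ a w 0) (w y1 + w y2)
    (sp (d / τ)) (2 * M * ε / τ) (M ^ 2 / τ ^ 2) M hg hg1 hg2 hW hQ0 hQ hA hM
    (sp_nonneg _) (by positivity)
  rw [pBr]
  calc |(w y1 + w y2) ^ 2 * pG τ C s a w y1 y2 0 +
        2 * (w y1 + w y2) * pG1 τ s a w y1 y2 0 + pG2 τ a w y1 y2 0 -
        4 * (pZ1 a w 0 / pZ a w 0) *
          ((w y1 + w y2) * pG τ C s a w y1 y2 0 + pG1 τ s a w y1 y2 0) -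
        2 * pG τ C s a w y1 y2 0 * (pZ2 a w 0 / pZ a w 0) +
        6 * pG τ C s a w y1 y2 0 * (pZ1 a w 0 / pZ a w 0) ^ 2| ≤
      20 * sp (d / τ) * M ^ 2 + 8 * M * (2 * M * ε / τ) + M ^ 2 / τ ^ 2 := key
  _ = (20 * sp (d / τ) + 16 * ε / τ + 1 / τ ^ 2) * M ^ 2 := by ring

lemma pc2_bound [Nonempty Y] (hτ : 0 < τ) (d ε M : ℝ) (hd : 0 ≤ d) (hε : 0 ≤ ε) (hM : 0 ≤ M)
    (hw : ∀ y, |w y| ≤ M)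
    (hdiam : ∀ y1 y2, |a y1 - a y2| ≤ d)
    (hclose : ∀ y1 y2, |s y1 y2 - sg ((a y1 - a y2) / τ)| ≤ ε)
    (hC1 : ∀ y1 y2, -Real.log 2 ≤ C y1 y2) (hC2 : ∀ y1 y2, C y1 y2 ≤ 0)
    (hs0 : ∀ y1 y2, 0 ≤ s y1 y2) (hs1 : ∀ y1 y2, s y1 y2 ≤ 1) :
    |pc2 τ C s a w| ≤ (20 * sp (d / τ) + 16 * ε / τ + 1 / τ ^ 2) * M ^ 2 := by
  have hZ := pZ_pos a w (0:ℝ)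
  have hP : ∀ y : Y, 0 ≤ pe a w y 0 / pZ a w 0 :=
    fun y => div_nonneg (pe_pos a w y 0).le hZ.le
  have hsum1 : ∑ y : Y, pe a w y 0 / pZ a w 0 = 1 := by
    rw [← Finset.sum_div]
    exact div_self hZ.ne'
  have hbr := pBr_bound τ C s a w hτ d ε M hd hε hM hw hdiam hclose hC1 hC2 hs0 hs1
  rw [pc2]
  calc |∑ y1 : Y, ∑ y2 : Y,
        pe a w y1 0 / pZ a w 0 * (pe a w y2 0 / pZ a w 0) * pBr τ C s a w y1 y2| ≤
      ∑ y1 : Y, |∑ y2 : Y,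
        pe a w y1 0 / pZ a w 0 * (pe a w y2 0 / pZ a w 0) * pBr τ C s a w y1 y2| :=
        Finset.abs_sum_le_sum_abs _ _
  _ ≤ ∑ y1 : Y, ∑ y2 : Y,
        |pe a w y1 0 / pZ a w 0 * (pe a w y2 0 / pZ a w 0) * pBr τ C s a w y1 y2| :=
        Finset.sum_le_sum fun y1 _ => Finset.abs_sum_le_sum_abs _ _
  _ ≤ ∑ y1 : Y, ∑ y2 : Y,
        pe a w y1 0 / pZ a w 0 * (pe a w y2 0 / pZ a w 0) *
          ((20 * sp (d / τ) + 16 * ε / τ + 1 / τ ^ 2) * M ^ 2) := by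
        apply Finset.sum_le_sum
        intro y1 _
        apply Finset.sum_le_sum
        intro y2 _
        rw [abs_mul, abs_mul, abs_of_nonneg (hP y1), abs_of_nonneg (hP y2)]
        exact mul_le_mul_of_nonneg_left (hbr y1 y2) (mul_nonneg (hP y1) (hP y2))
  _ = (20 * sp (d / τ) + 16 * ε / τ + 1 / τ ^ 2) * M ^ 2 := by
        have hrow : ∀ y1 : Y, (∑ y2 : Y,
            pe a w y1 0 / pZ a w 0 * (pe a w y2 0 / pZ a w 0) *
              ((20 * sp (d / τ) + 16 * ε / τ + 1 / τ ^ 2) * M ^ 2)) =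
            pe a w y1 0 / pZ a w 0 * ((20 * sp (d / τ) + 16 * ε / τ + 1 / τ ^ 2) * M ^ 2) := by
          intro y1
          rw [show (∑ y2 : Y, pe a w y1 0 / pZ a w 0 * (pe a w y2 0 / pZ a w 0) *
              ((20 * sp (d / τ) + 16 * ε / τ + 1 / τ ^ 2) * M ^ 2)) =
            (∑ y2 : Y, pe a w y2 0 / pZ a w 0) *
              (pe a w y1 0 / pZ a w 0 * ((20 * sp (d / τ) + 16 * ε / τ + 1 / τ ^ 2) * M ^ 2))
            from by rw [Finset.sum_mul]; exact Finset.sum_congr rfl fun y2 _ => by ring]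
          rw [hsum1, one_mul]
        rw [Finset.sum_congr rfl fun y1 _ => hrow y1, ← Finset.sum_mul, hsum1, one_mul]

end PerX

lemma sg_eq (v : ℝ) : sg v = (1 + Real.exp (-v))⁻¹ := by
  rw [sg, Real.exp_neg]
  have h := (Real.exp_pos v).ne'
  have h2 : (1:ℝ) + (Real.exp v)⁻¹ ≠ 0 := by positivity
  field_simp
  ring

lemma contDiff_sp_comp {E : Type*} [NormedAddCommGroup E] [NormedSpace ℝ E]
    {f : E → ℝ} (hf : ContDiff ℝ 2 f) :
    ContDiff ℝ 2 (fun x => sp (f x)) := by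
  have h : ContDiff ℝ 2 (fun x => 1 + Real.exp (f x)) :=
    contDiff_const.add ((Real.contDiff_exp.of_le le_top).comp hf)
  exact h.log fun x => (one_add_exp_pos (f x)).ne'

lemma explicit_bound {X Y : Type*} [Fintype X] [Fintype Y] [Nonempty Y]
    (τ : ℝ) (hτ : 0 < τ) (D : X → ℝ) (hD0 : ∀ x, 0 ≤ D x) (hD1 : ∑ x : X, D x = 1)
    (C s : X → Y → Y → ℝ)
    (hC1 : ∀ x y1 y2, -Real.log 2 ≤ C x y1 y2) (hC2 : ∀ x y1 y2, C x y1 y2 ≤ 0)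
    (hs0 : ∀ x y1 y2, 0 ≤ s x y1 y2) (hs1 : ∀ x y1 y2, s x y1 y2 ≤ 1)
    (N : (X × Y → ℝ) → ℝ)
    (hN : ∀ θ0, N θ0 = ∑ x : X, D x * ∑ y1 : Y, ∑ y2 : Y,
      Real.exp (θ0 (x, y1)) / (∑ y' : Y, Real.exp (θ0 (x, y'))) *
      (Real.exp (θ0 (x, y2)) / (∑ y' : Y, Real.exp (θ0 (x, y')))) *
      (C x y1 y2 + s x y1 y2 * sp (-((θ0 (x, y1) - θ0 (x, y2)) / τ)) +
        (1 - s x y1 y2) * sp ((θ0 (x, y1) - θ0 (x, y2)) / τ)))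
    (d ε : ℝ) (hd : 0 ≤ d) (hε : 0 ≤ ε)
    (θ z : X × Y → ℝ)
    (hdiam : ∀ x y1 y2, |θ (x, y1) - θ (x, y2)| ≤ d)
    (hclose : ∀ x y1 y2, |s x y1 y2 - sg ((θ (x, y1) - θ (x, y2)) / τ)| ≤ ε) :
    |fderiv ℝ (fderiv ℝ N) θ z z| ≤
      (20 * sp (d / τ) + 16 * ε / τ + 4 / τ ^ 2 + 16 * Real.log 2) * ∑ p : X × Y, z p ^ 2 := by
  have hτ' : τ ≠ 0 := hτ.ne'
  have hNe : N = fun θ0 => ∑ x : X, D x * ∑ y1 : Y, ∑ y2 : Y,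
      Real.exp (θ0 (x, y1)) / (∑ y' : Y, Real.exp (θ0 (x, y'))) *
      (Real.exp (θ0 (x, y2)) / (∑ y' : Y, Real.exp (θ0 (x, y')))) *
      (C x y1 y2 + s x y1 y2 * sp (-((θ0 (x, y1) - θ0 (x, y2)) / τ)) +
        (1 - s x y1 y2) * sp ((θ0 (x, y1) - θ0 (x, y2)) / τ)) := funext hN
  -- smoothness
  have hproj : ∀ p : X × Y, ContDiff ℝ 2 (fun θ0 : X × Y → ℝ => θ0 p) := fun p =>
    (ContinuousLinearMap.proj (R := ℝ) (φ := fun _ : X × Y => ℝ) p).contDiff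
  have hexp : ∀ p : X × Y, ContDiff ℝ 2 (fun θ0 : X × Y → ℝ => Real.exp (θ0 p)) := fun p =>
    (Real.contDiff_exp.of_le le_top).comp (hproj p)
  have hZpos : ∀ (θ0 : X × Y → ℝ) (x : X), 0 < ∑ y' : Y, Real.exp (θ0 (x, y')) := fun θ0 x =>
    Finset.sum_pos (fun y _ => Real.exp_pos _) Finset.univ_nonempty
  have hZc : ∀ x : X, ContDiff ℝ 2 (fun θ0 : X × Y → ℝ => ∑ y' : Y, Real.exp (θ0 (x, y'))) :=
    fun x => ContDiff.sum fun y' _ => hexp (x, y')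
  have hcd : ContDiff ℝ 2 N := by
    rw [hNe]
    apply ContDiff.sum
    intro x _
    apply ContDiff.mul contDiff_const
    apply ContDiff.sum; intro y1 _
    apply ContDiff.sum; intro y2 _
    have hP1 : ContDiff ℝ 2 (fun θ0 : X × Y → ℝ =>
        Real.exp (θ0 (x, y1)) / (∑ y' : Y, Real.exp (θ0 (x, y')))) :=
      (hexp (x, y1)).div (hZc x) fun θ0 => (hZpos θ0 x).ne'
    have hP2 : ContDiff ℝ 2 (fun θ0 : X × Y → ℝ =>
        Real.exp (θ0 (x, y2)) / (∑ y' : Y, Real.exp (θ0 (x, y')))) :=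
      (hexp (x, y2)).div (hZc x) fun θ0 => (hZpos θ0 x).ne'
    have hu : ContDiff ℝ 2 (fun θ0 : X × Y → ℝ => (θ0 (x, y1) - θ0 (x, y2)) / τ) :=
      ((hproj (x, y1)).sub (hproj (x, y2))).div_const τ
    have hsp1 : ContDiff ℝ 2 (fun θ0 : X × Y → ℝ =>
        sp (-((θ0 (x, y1) - θ0 (x, y2)) / τ))) := contDiff_sp_comp hu.neg
    have hsp2 : ContDiff ℝ 2 (fun θ0 : X × Y → ℝ =>
        sp ((θ0 (x, y1) - θ0 (x, y2)) / τ)) := contDiff_sp_comp hu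
    exact (hP1.mul hP2).mul
      ((contDiff_const.add (contDiff_const.mul hsp1)).add (contDiff_const.mul hsp2))
  rw [second_deriv_line N hcd θ z]
  -- line function
  have hψ : (fun t : ℝ => N (θ + t • z)) = fun t => ∑ x : X, D x *
      pF τ (C x) (s x) (fun y => θ (x, y)) (fun y => z (x, y)) t := by
    funext t
    rw [hN]
    simp only [pF, pe, pZ, pG, pu, Pi.add_apply, Pi.smul_apply, smul_eq_mul]
  rw [hψ]
  have hder1 : ∀ t : ℝ, HasDerivAt (fun t => ∑ x : X, D x *
      pF τ (C x) (s x) (fun y => θ (x, y)) (fun y => z (x, y)) t)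
      (∑ x : X, D x * pF1 τ (C x) (s x) (fun y => θ (x, y)) (fun y => z (x, y)) t) t :=
    fun t => HasDerivAt.fun_sum fun x _ =>
      HasDerivAt.const_mul (D x)
        (hasDerivAt_pF τ (C x) (s x) (fun y => θ (x, y)) (fun y => z (x, y)) hτ' t)
  have hderiv1 : deriv (fun t : ℝ => ∑ x : X, D x *
      pF τ (C x) (s x) (fun y => θ (x, y)) (fun y => z (x, y)) t) = fun t =>
      ∑ x : X, D x * pF1 τ (C x) (s x) (fun y => θ (x, y)) (fun y => z (x, y)) t :=
    funext fun t => (hder1 t).deriv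
  rw [hderiv1]
  have hder2 : HasDerivAt (fun t : ℝ => ∑ x : X, D x *
      pF1 τ (C x) (s x) (fun y => θ (x, y)) (fun y => z (x, y)) t)
      (∑ x : X, D x * pc2 τ (C x) (s x) (fun y => θ (x, y)) (fun y => z (x, y))) 0 :=
    HasDerivAt.fun_sum fun x _ =>
      HasDerivAt.const_mul (D x)
        (hasDerivAt_pF1 τ (C x) (s x) (fun y => θ (x, y)) (fun y => z (x, y)) hτ')
  rw [hder2.deriv]
  -- final bound
  set S := ∑ p : X × Y, z p ^ 2 with hS
  have hS0 : 0 ≤ S := Finset.sum_nonneg fun p _ => sq_nonneg _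
  set M := Real.sqrt S with hM
  have hM0 : 0 ≤ M := Real.sqrt_nonneg _
  have hM2 : M ^ 2 = S := Real.sq_sqrt hS0
  have hw : ∀ (x : X) (y : Y), |z (x, y)| ≤ M := by
    intro x y
    rw [← Real.sqrt_sq_eq_abs]
    apply Real.sqrt_le_sqrt
    exact Finset.single_le_sum (fun p _ => sq_nonneg (z p)) (Finset.mem_univ (x, y))
  have hc2 : ∀ x : X, |pc2 τ (C x) (s x) (fun y => θ (x, y)) (fun y => z (x, y))| ≤
      (20 * sp (d / τ) + 16 * ε / τ + 1 / τ ^ 2) * M ^ 2 := fun x =>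
    pc2_bound τ (C x) (s x) (fun y => θ (x, y)) (fun y => z (x, y)) hτ d ε M hd hε hM0
      (fun y => hw x y) (fun y1 y2 => hdiam x y1 y2) (fun y1 y2 => hclose x y1 y2)
      (fun y1 y2 => hC1 x y1 y2) (fun y1 y2 => hC2 x y1 y2)
      (fun y1 y2 => hs0 x y1 y2) (fun y1 y2 => hs1 x y1 y2)
  have hlog2 : (0:ℝ) ≤ Real.log 2 := Real.log_nonneg one_le_two
  have hsp0 : (0:ℝ) ≤ sp (d / τ) := sp_nonneg _
  calc |∑ x : X, D x * pc2 τ (C x) (s x) (fun y => θ (x, y)) (fun y => z (x, y))| ≤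
      ∑ x : X, |D x * pc2 τ (C x) (s x) (fun y => θ (x, y)) (fun y => z (x, y))| :=
        Finset.abs_sum_le_sum_abs _ _
  _ ≤ ∑ x : X, D x * ((20 * sp (d / τ) + 16 * ε / τ + 1 / τ ^ 2) * M ^ 2) := by
      apply Finset.sum_le_sum
      intro x _
      rw [abs_mul, abs_of_nonneg (hD0 x)]
      exact mul_le_mul_of_nonneg_left (hc2 x) (hD0 x)
  _ = (20 * sp (d / τ) + 16 * ε / τ + 1 / τ ^ 2) * M ^ 2 := by
      rw [← Finset.sum_mul, hD1, one_mul]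
  _ ≤ (20 * sp (d / τ) + 16 * ε / τ + 4 / τ ^ 2 + 16 * Real.log 2) * S := by
      rw [hM2]
      apply mul_le_mul_of_nonneg_right _ hS0
      have h1 : 1 / τ ^ 2 ≤ 4 / τ ^ 2 := by
        apply div_le_div_of_nonneg_right _ (by positivity)
        all_goals norm_num
      linarith


/-- The PRA loss of the softmax-parametrized policy under the
Bradley–Terry comparison model satisfies, at every θ whose logits have diameter at
most d and whose model comparison probabilities are within ε₃ of the true ones, the
second-derivative bound
|D²L(θ)(z,z)| ≤ (20·log(1 + e^{d/τ}) + 16ε₃/τ + 4/τ² + 16·log 2)·Σ_{x,y} z(x,y)². -/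
theorem pra_loss_smooth
    {X Y : Type*} [Fintype X] [Fintype Y] [Nonempty X] [Nonempty Y]
    (r : X → Y → ℝ) (τ : ℝ) (hτ : 0 < τ)
    (D : X → ℝ) (hD0 : ∀ x, 0 ≤ D x) (hD1 : ∑ x : X, D x = 1)
    (σ : ℝ → ℝ) (hσ : ∀ t, σ t = (1 + Real.exp (-t))⁻¹)
    (pstar : X → Y → Y → ℝ)
    (hpstar : ∀ x y₁ y₂, pstar x y₁ y₂ = σ (r x y₁ - r x y₂))
    (πθ : (X × Y → ℝ) → X → Y → ℝ)
    (hπθ : ∀ θ x y, πθ θ x y = Real.exp (θ (x, y)) / ∑ y' : Y, Real.exp (θ (x, y')))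
    (hθfun : (X × Y → ℝ) → X → Y → Y → ℝ)
    (hhθfun : ∀ θ x y₁ y₂, hθfun θ x y₁ y₂ =
      (1 / τ) * Real.log (πθ θ x y₁ / πθ θ x y₂))
    (pθ : (X × Y → ℝ) → X → Y → Y → ℝ)
    (hpθ : ∀ θ x y₁ y₂, pθ θ x y₁ y₂ = σ (hθfun θ x y₁ y₂))
    (L : (X × Y → ℝ) → ℝ)
    (hL : ∀ θ, L θ = ∑ x : X, D x * ∑ y₁ : Y, ∑ y₂ : Y,
      πθ θ x y₁ * πθ θ x y₂ *
        (pstar x y₁ y₂ * Real.log (pstar x y₁ y₂ / pθ θ x y₁ y₂) +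
         (1 - pstar x y₁ y₂) *
           Real.log ((1 - pstar x y₁ y₂) / (1 - pθ θ x y₁ y₂))))
    (d ε₃ : ℝ) (hd : 0 ≤ d) (hε₃ : 0 ≤ ε₃)
    (θ : X × Y → ℝ)
    (hθdiam : ∀ x₁ x₂ y₁ y₂, |θ (x₁, y₁) - θ (x₂, y₂)| ≤ d)
    (hθprob : ∀ x y₁ y₂, |pstar x y₁ y₂ - pθ θ x y₁ y₂| ≤ ε₃) :
    ∀ z : X × Y → ℝ,
      |fderiv ℝ (fderiv ℝ L) θ z z| ≤
        (20 * Real.log (1 + Real.exp (d / τ)) + 16 * ε₃ / τ + 4 / τ ^ 2 +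
          16 * Real.log 2) * ∑ p : X × Y, z p ^ 2 := by
  intro z
  have hZpos : ∀ (θ0 : X × Y → ℝ) (x : X), 0 < ∑ y' : Y, Real.exp (θ0 (x, y')) :=
    fun θ0 x => Finset.sum_pos (fun y _ => Real.exp_pos _) Finset.univ_nonempty
  have hhf : ∀ (θ0 : X × Y → ℝ) (x : X) (y1 y2 : Y),
      hθfun θ0 x y1 y2 = (θ0 (x, y1) - θ0 (x, y2)) / τ := by
    intro θ0 x y1 y2
    rw [hhθfun, hπθ, hπθ]
    have hZ := (hZpos θ0 x).ne'
    have hratio : Real.exp (θ0 (x, y1)) / (∑ y' : Y, Real.exp (θ0 (x, y'))) /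
        (Real.exp (θ0 (x, y2)) / (∑ y' : Y, Real.exp (θ0 (x, y')))) =
        Real.exp (θ0 (x, y1) - θ0 (x, y2)) := by
      rw [Real.exp_sub]
      field_simp
    rw [hratio, Real.log_exp]
    ring
  have hps01 : ∀ x y1 y2, 0 < pstar x y1 y2 ∧ pstar x y1 y2 < 1 := by
    intro x y1 y2
    rw [hpstar, hσ]
    constructor
    · exact inv_pos.2 (one_add_exp_pos _)
    · apply inv_lt_one_of_one_lt₀
      linarith [Real.exp_pos (-(r x y1 - r x y2))]
  have hC1 : ∀ x y1 y2, -Real.log 2 ≤ pstar x y1 y2 * Real.log (pstar x y1 y2) +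
      (1 - pstar x y1 y2) * Real.log (1 - pstar x y1 y2) := fun x y1 y2 =>
    (entropy_bounds (hps01 x y1 y2).1 (hps01 x y1 y2).2).1
  have hC2 : ∀ x y1 y2, pstar x y1 y2 * Real.log (pstar x y1 y2) +
      (1 - pstar x y1 y2) * Real.log (1 - pstar x y1 y2) ≤ 0 := fun x y1 y2 =>
    (entropy_bounds (hps01 x y1 y2).1 (hps01 x y1 y2).2).2
  have hclose : ∀ x y1 y2, |pstar x y1 y2 - sg ((θ (x, y1) - θ (x, y2)) / τ)| ≤ ε₃ := by
    intro x y1 y2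
    have h := hθprob x y1 y2
    rw [hpθ, hσ, hhf] at h
    rw [← sg_eq] at h
    exact h
  have hN : ∀ θ0, L θ0 = ∑ x : X, D x * ∑ y1 : Y, ∑ y2 : Y,
      Real.exp (θ0 (x, y1)) / (∑ y' : Y, Real.exp (θ0 (x, y'))) *
      (Real.exp (θ0 (x, y2)) / (∑ y' : Y, Real.exp (θ0 (x, y')))) *
      ((pstar x y1 y2 * Real.log (pstar x y1 y2) +
          (1 - pstar x y1 y2) * Real.log (1 - pstar x y1 y2)) +
        pstar x y1 y2 * sp (-((θ0 (x, y1) - θ0 (x, y2)) / τ)) +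
        (1 - pstar x y1 y2) * sp ((θ0 (x, y1) - θ0 (x, y2)) / τ)) := by
    intro θ0
    rw [hL θ0]
    apply Finset.sum_congr rfl
    intro x _
    congr 1
    apply Finset.sum_congr rfl
    intro y1 _
    apply Finset.sum_congr rfl
    intro y2 _
    rw [hπθ θ0 x y1, hπθ θ0 x y2, hpθ θ0 x y1 y2, hσ, hhf θ0 x y1 y2]
    congr 1
    exact kl_identity (hps01 x y1 y2).1 (hps01 x y1 y2).2
  have H := explicit_bound τ hτ D hD0 hD1
    (fun x y1 y2 => pstar x y1 y2 * Real.log (pstar x y1 y2) +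
      (1 - pstar x y1 y2) * Real.log (1 - pstar x y1 y2)) pstar
    hC1 hC2 (fun x y1 y2 => (hps01 x y1 y2).1.le) (fun x y1 y2 => (hps01 x y1 y2).2.le)
    L hN d ε₃ hd hε₃ θ z (fun x y1 y2 => hθdiam x x y1 y2) hclose
  simpa only [sp] using H
end
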